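/- (Relative isoperimetric inequality) There are constants C = C(T) and λ = λ(T) ≥ 1, depending only on the data of T, such that min{ μ(B ∩ U⁺)/μ(B), μ(B ∩ U⁻)/μ(B) } ≤ C (r/μ(λB)) H(S ∩ λB) for all balls B = B(x, r) for which λB ⊂ π φ̃^{−1}(−1/4, 1/4). -/

import Mathlib

open MeasureTheory Metric Set Filter Topology
open scoped ENNReal NNReal unitInterval

noncomputable section

namespace Duality

/-! ### Rectifiable curves, line integrals and upper gradients

A rectifiable path is encoded by its arclength-type parametrization: a `1`-Lipschitz
map defined on a compact interval `[a, b]`.  The line integral `∫_γ ρ ds` of a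
nonnegative Borel function is then the Lebesgue integral of `ρ ∘ γ` over `[a, b]`. -/

structure UPath (X : Type*) [PseudoMetricSpace X] where
  a : ℝ
  b : ℝ
  hab : a ≤ b
  toFun : ℝ → X
  lip : LipschitzOnWith 1 toFun (Set.Icc a b)

namespace UPath

variable {X : Type*} [PseudoMetricSpace X]

/-- starting point of the path -/
def start (γ : UPath X) : X := γ.toFun γ.a

/-- end point of the path -/
def finish (γ : UPath X) : X := γ.toFun γ.b

/-- The line integral `∫_γ ρ ds`. -/
def integral (γ : UPath X) (ρ : X → ℝ≥0∞) : ℝ≥0∞ :=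
  ∫⁻ t in Set.Icc γ.a γ.b, ρ (γ.toFun t)

/-- The image (trace) `|γ|` of the path. -/
def trace (γ : UPath X) : Set X := γ.toFun '' Set.Icc γ.a γ.b

/-- The length of the path. -/
def length (γ : UPath X) : ℝ≥0∞ := eVariationOn γ.toFun (Set.Icc γ.a γ.b)

/-- The path stays inside the set `W`. -/
def InSet (γ : UPath X) (W : Set X) : Prop := ∀ t ∈ Set.Icc γ.a γ.b, γ.toFun t ∈ W

/-- The reparametrization of a rectifiable path as a `Path` (continuous map from `[0,1]`). -/
def toPath (γ : UPath X) : Path γ.start γ.finish where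
  toFun := fun t => γ.toFun (γ.a + (t : ℝ) * (γ.b - γ.a))
  continuous_toFun := by
    have hmem : ∀ t : unitInterval, γ.a + (t : ℝ) * (γ.b - γ.a) ∈ Set.Icc γ.a γ.b := by
      intro t
      obtain ⟨ht0, ht1⟩ := t.2
      constructor
      · nlinarith [γ.hab]
      · nlinarith [γ.hab]
    exact γ.lip.continuousOn.comp_continuous (by continuity) hmem
  source' := by simp [start]
  target' := by simp [finish]

end UPath

/-- `ρ` is an upper gradient of `u`. -/
def IsUpperGradient {X : Type*} [PseudoMetricSpace X] {Y : Type*} [PseudoEMetricSpace Y]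
    (u : X → Y) (ρ : X → ℝ≥0∞) : Prop :=
  ∀ γ : UPath X, edist (u γ.start) (u γ.finish) ≤ γ.integral ρ

/-- The `p`-modulus of a family of (rectifiable) paths. -/
def pathMod {X : Type*} [PseudoMetricSpace X] [MeasurableSpace X]
    (μ : Measure X) (p : ℝ) (Γ : Set (UPath X)) : ℝ≥0∞ :=
  ⨅ (ρ : X → ℝ≥0∞) (_ : Measurable ρ ∧ ∀ γ ∈ Γ, 1 ≤ γ.integral ρ),
    ∫⁻ x, ρ x ^ p ∂μ

/-- `ρ` is a `p`-weak upper gradient of `u`: the upper gradient inequality may fail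
only on a path family of zero `p`-modulus. -/
def IsWeakUpperGradient {X : Type*} [PseudoMetricSpace X] [MeasurableSpace X]
    {Y : Type*} [PseudoEMetricSpace Y] (μ : Measure X) (p : ℝ)
    (u : X → Y) (ρ : X → ℝ≥0∞) : Prop :=
  pathMod μ p {γ : UPath X | ¬ edist (u γ.start) (u γ.finish) ≤ γ.integral ρ} = 0

/-- `ρ` is a `p`-weak upper gradient of `u` in the subset `U`. -/
def IsWeakUpperGradientOn {X : Type*} [PseudoMetricSpace X] [MeasurableSpace X]
    {Y : Type*} [PseudoEMetricSpace Y] (μ : Measure X) (p : ℝ) (U : Set X)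
    (u : X → Y) (ρ : X → ℝ≥0∞) : Prop :=
  pathMod (μ.restrict U) p
    {γ : UPath X | γ.InSet U ∧ ¬ edist (u γ.start) (u γ.finish) ≤ γ.integral ρ} = 0

/-- `ρ` is the minimal `p`-weak upper gradient of `u`: it is a `p`-integrable `p`-weak
upper gradient which is `μ`-a.e. dominated by every other one. -/
def IsMinimalWeakUpperGradient {X : Type*} [PseudoMetricSpace X] [MeasurableSpace X]
    {Y : Type*} [PseudoEMetricSpace Y] (μ : Measure X) (p : ℝ)
    (u : X → Y) (ρ : X → ℝ≥0∞) : Prop :=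
  Measurable ρ ∧ IsWeakUpperGradient μ p u ρ ∧ (∫⁻ x, ρ x ^ p ∂μ) < ⊤ ∧
    ∀ ρ' : X → ℝ≥0∞, Measurable ρ' → IsWeakUpperGradient μ p u ρ' →
      (∫⁻ x, ρ' x ^ p ∂μ) < ⊤ → ∀ᵐ x ∂μ, ρ x ≤ ρ' x

/-! ### Doubling measures, Poincaré inequalities, Ahlfors regularity -/

/-- `μ` is a doubling (Borel) measure with doubling constant `Cμ`:
`0 < μ(2B) ≤ Cμ · μ(B) < ∞` for every ball `B` of radius `r < diam T`. -/
def IsDoubling {X : Type*} [MetricSpace X] [MeasurableSpace X]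
    (μ : Measure X) (Cμ : ℝ≥0∞) : Prop :=
  ∀ (x : X) (r : ℝ), 0 < r → r < Metric.diam (Set.univ : Set X) →
    0 < μ (ball x (2 * r)) ∧ μ (ball x (2 * r)) ≤ Cμ * μ (ball x r) ∧
      Cμ * μ (ball x r) < ⊤

/-- `(X, d, μ)` supports a weak `1`-Poincaré inequality with constants `CP`, `lP`:
`⨍_B |u - u_B| dμ ≤ CP · diam B · ⨍_{lP·B} ρ dμ` for every locally integrable `u`
and every upper gradient `ρ` of `u`, and balls have positive finite measure. -/
def SupportsPoincare {X : Type*} [MetricSpace X] [MeasurableSpace X]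
    (μ : Measure X) (CP lP : ℝ) : Prop :=
  (∀ (x : X) (r : ℝ), 0 < r → 0 < μ (ball x r) ∧ μ (ball x r) < ⊤) ∧
  ∀ (u : X → ℝ) (ρ : X → ℝ≥0∞), LocallyIntegrable u μ → Measurable ρ →
    IsUpperGradient u ρ → ∀ (x : X) (r : ℝ), 0 < r →
      (∫⁻ y in ball x r, ENNReal.ofReal |u y - ⨍ z in ball x r, u z ∂μ| ∂μ) /
          μ (ball x r) ≤
        ENNReal.ofReal (CP * Metric.diam (ball x r)) *
          ((∫⁻ y in ball x (lP * r), ρ y ∂μ) / μ (ball x (lP * r)))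

/-- `μ` is Ahlfors `q`-regular with constants `0 < aA ≤ AA`. -/
def IsAhlforsRegular {X : Type*} [MetricSpace X] [MeasurableSpace X]
    (μ : Measure X) (q aA AA : ℝ) : Prop :=
  0 < aA ∧ aA ≤ AA ∧
    ∀ (x : X) (r : ℝ), 0 < r → r < Metric.diam (Set.univ : Set X) →
      ENNReal.ofReal (aA * r ^ q) ≤ μ (ball x r) ∧
        μ (ball x r) ≤ ENNReal.ofReal (AA * r ^ q)

/-! ### The circle `ℝ/ℤ`, loops and degree -/

lemma intCast_coe_eq_zero (k : ℤ) : ((k : ℝ) : UnitAddCircle) = 0 :=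
  (AddCircle.coe_eq_zero_iff _).mpr ⟨k, by simp⟩

/-- The standard loop of degree `k` in `ℝ/ℤ` based at `y`: `t ↦ y + [k t]`. -/
def stdLoop (k : ℤ) (y : UnitAddCircle) : Path y y where
  toFun := fun t => y + (((k : ℝ) * (t : ℝ) : ℝ) : UnitAddCircle)
  continuous_toFun := by
    refine continuous_const.add ?_
    exact (AddCircle.continuous_mk' 1).comp (by continuity)
  source' := by simp
  target' := by
    have h1 : ((1 : unitInterval) : ℝ) = 1 := rfl
    have h : (((k : ℝ) * ((1 : unitInterval) : ℝ) : ℝ) : UnitAddCircle) = 0 := by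
      rw [h1, mul_one]; exact intCast_coe_eq_zero k
    simp [h]

/-- Concatenation of `n` copies of a loop. -/
def loopPow {X : Type*} [TopologicalSpace X] {x : X} (γ : Path x x) : ℕ → Path x x
  | 0 => Path.refl x
  | n + 1 => (loopPow γ n).trans γ

/-- A loop `γ` based at `x` has degree 1 (relative to the chosen generator `α₀` based
at `x₀`) if it is loop-homotopic to a conjugate `η * α₀ * η⁻¹` of `α₀`. -/
def IsDegreeOneLoop {T : Type*} [TopologicalSpace T] (x₀ : T) (α₀ : Path x₀ x₀)
    {x : T} (γ : Path x x) : Prop :=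
  ∃ η : Path x x₀, Path.Homotopic γ (η.trans (α₀.trans η.symm))

/-- A map `f : T → ℝ/ℤ` has degree `k`: it pushes every degree-1 loop based at `x`
to a loop which is loop-homotopic to `[f x] + k·β`, `β (t) = [t]`. -/
def HasDegree {T : Type*} [TopologicalSpace T] (x₀ : T) (α₀ : Path x₀ x₀)
    (f : T → UnitAddCircle) (k : ℤ) : Prop :=
  ∃ hf : Continuous f, ∀ (x : T) (γ : Path x x), IsDegreeOneLoop x₀ α₀ γ →
    Path.Homotopic (γ.map hf) (stdLoop k (f x))

/-- The class of `α₀` generates `π₁(T, x₀) ≅ ℤ`. -/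
def IsGenerator {T : Type*} [TopologicalSpace T] (x₀ : T) (α₀ : Path x₀ x₀) : Prop :=
  Function.Bijective fun k : ℤ =>
    (FundamentalGroup.fromPath (X := TopCat.of T) ⟦α₀⟧ : FundamentalGroup (TopCat.of T) x₀) ^ k

/-- `T` is semilocally simply connected. -/
def SemilocallySimplyConnected (T : Type*) [TopologicalSpace T] : Prop :=
  ∀ x : T, ∃ U ∈ 𝓝 x, ∀ γ : Path x x, (∀ t, γ t ∈ U) → Path.Homotopic γ (Path.refl x)

/-- `f` is a Lipschitz map of degree 1. -/
def DegOneLip {T : Type*} [MetricSpace T] (x₀ : T) (α₀ : Path x₀ x₀)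
    (f : T → UnitAddCircle) : Prop :=
  (∃ L : ℝ≥0, LipschitzWith L f) ∧ HasDegree x₀ α₀ f 1

/-! ### Capacity and surface modulus -/

/-- The degree 1 `p`-capacity of `T`, defined through minimal `p`-weak upper gradients:
the infimum of `∫ ρ^p dμ` over `p`-weak upper gradients `ρ` of Lipschitz degree-1 maps. -/
def cap {T : Type*} [MetricSpace T] [MeasurableSpace T] (μ : Measure T) (p : ℝ)
    (x₀ : T) (α₀ : Path x₀ x₀) : ℝ≥0∞ :=
  ⨅ (f : T → UnitAddCircle) (_ : DegOneLip x₀ α₀ f) (ρ : T → ℝ≥0∞)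
    (_ : Measurable ρ ∧ IsWeakUpperGradient μ p f ρ),
      ∫⁻ x, ρ x ^ p ∂μ

/-- The pointwise Lipschitz constant `Lip f (x)`. -/
def pLip {T : Type*} [MetricSpace T] (f : T → UnitAddCircle) (x : T) : ℝ≥0∞ :=
  Filter.limsup
    (fun r : ℝ => ⨆ y ∈ ball x r, edist (f x) (f y) / ENNReal.ofReal r) (𝓝[>] (0 : ℝ))

/-- The degree 1 `p`-capacity of `T`, defined through pointwise Lipschitz constants. -/
def capLip {T : Type*} [MetricSpace T] [MeasurableSpace T] (μ : Measure T) (p : ℝ)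
    (x₀ : T) (α₀ : Path x₀ x₀) : ℝ≥0∞ :=
  ⨅ (f : T → UnitAddCircle) (_ : DegOneLip x₀ α₀ f), ∫⁻ x, pLip f x ^ p ∂μ

/-- The codimension 1 spherical Hausdorff measure, as a set function:
`H(A) = sup_{δ>0} inf { ∑ μ(B_i)/r_i }`, the infimum being over countable covers of `A`
by balls `B_i` of radii `r_i ≤ δ`. -/
def codimH {T : Type*} [MetricSpace T] [MeasurableSpace T] (μ : Measure T)
    (A : Set T) : ℝ≥0∞ :=
  ⨆ (δ : ℝ) (_ : 0 < δ),
    ⨅ (c : ℕ → T) (r : ℕ → ℝ) (_ : ∀ i, r i ≤ δ)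
      (_ : A ⊆ ⋃ i, ball (c i) (r i)),
        ∑' i, μ (ball (c i) (r i)) / ENNReal.ofReal (r i)

/-- The integral `∫_S g dH` of `g ≥ 0` over `S` against the codimension 1 Hausdorff
measure, via the layer-cake (Choquet) formula. -/
def choquetIntegral {T : Type*} [MetricSpace T] [MeasurableSpace T] (μ : Measure T)
    (S : Set T) (g : T → ℝ≥0∞) : ℝ≥0∞ :=
  ∫⁻ t in Set.Ioi (0 : ℝ), codimH μ {x | x ∈ S ∧ ENNReal.ofReal t < g x}

/-- The family `Γ*` of all level sets `φ⁻¹[0]` of finite codimension 1 Hausdorff measure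
of continuous degree-1 maps `φ : T → ℝ/ℤ`. -/
def Surfaces {T : Type*} [MetricSpace T] [MeasurableSpace T] (μ : Measure T)
    (x₀ : T) (α₀ : Path x₀ x₀) : Set (Set T) :=
  {S | ∃ φ : T → UnitAddCircle, HasDegree x₀ α₀ φ 1 ∧ S = φ ⁻¹' {0} ∧ codimH μ S < ⊤}

/-- The surface `q`-modulus of a family of surfaces, the surfaces being equipped with the
codimension 1 Hausdorff measure. -/
def surfModOf {T : Type*} [MetricSpace T] [MeasurableSpace T] (μ : Measure T) (q : ℝ)
    (𝒮 : Set (Set T)) : ℝ≥0∞ :=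
  ⨅ (ρ : T → ℝ≥0∞) (_ : Measurable ρ ∧ ∀ S ∈ 𝒮, 1 ≤ choquetIntegral μ S ρ),
    ∫⁻ x, ρ x ^ q ∂μ

/-- The surface modulus `mod_q T`. -/
def surfMod {T : Type*} [MetricSpace T] [MeasurableSpace T] (μ : Measure T) (q : ℝ)
    (x₀ : T) (α₀ : Path x₀ x₀) : ℝ≥0∞ :=
  surfModOf μ q (Surfaces μ x₀ α₀)

/-- The family `Γ*` with the `(q-1)`-dimensional Hausdorff measure instead. -/
def SurfacesH {T : Type*} [MetricSpace T] [MeasurableSpace T] [BorelSpace T] (q : ℝ)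
    (x₀ : T) (α₀ : Path x₀ x₀) : Set (Set T) :=
  {S | ∃ φ : T → UnitAddCircle, HasDegree x₀ α₀ φ 1 ∧ S = φ ⁻¹' {0} ∧ μH[q - 1] S < ⊤}

/-- The surface modulus `mod_q T` defined through the `(q-1)`-dimensional Hausdorff
measures `H^{q-1} ⌞ S`, `S ∈ Γ*`. -/
def surfModH {T : Type*} [MetricSpace T] [MeasurableSpace T] [BorelSpace T]
    (μ : Measure T) (q pstar : ℝ) (x₀ : T) (α₀ : Path x₀ x₀) : ℝ≥0∞ :=
  ⨅ (ρ : T → ℝ≥0∞)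
    (_ : Measurable ρ ∧ ∀ S ∈ SurfacesH (T := T) q x₀ α₀, 1 ≤ ∫⁻ x in S, ρ x ∂μH[q - 1]),
      ∫⁻ x, ρ x ^ pstar ∂μ

/-- The standing assumptions 2.1. -/
def Standing {T : Type*} [MetricSpace T] [MeasurableSpace T] (μ : Measure T)
    (Cμ : ℝ≥0∞) (CP lP : ℝ) (x₀ : T) (α₀ : Path x₀ x₀) : Prop :=
  IsDoubling μ Cμ ∧ SupportsPoincare μ CP lP ∧ SemilocallySimplyConnected T ∧
    IsGenerator x₀ α₀ ∧ ∃ f : T → UnitAddCircle, DegOneLip x₀ α₀ f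

/-! ### The universal cover -/

/-- `π` is a local isometry. -/
def IsLocalIsometry {X Y : Type*} [MetricSpace X] [MetricSpace Y] (π : X → Y) : Prop :=
  ∀ x : X, ∃ ε : ℝ, 0 < ε ∧
    ∀ y ∈ ball x ε, ∀ z ∈ ball x ε, dist (π y) (π z) = dist y z

/-- `(T̃, π)` is the universal cover of `T`, with `T̃` carrying the length metric pulled
back by `π` (so that `π` is a local isometry). -/
def CoverSetup {T Tt : Type*} [MetricSpace T] [MetricSpace Tt] (π : Tt → T) : Prop :=
  IsCoveringMap π ∧ Function.Surjective π ∧ IsLocalIsometry π ∧ SimplyConnectedSpace Tt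

/-- `τ` is the deck transformation of the cover `π` determined by
`τ (γ̃ 0) = γ̃ 1` for every lift `γ̃` of every degree-1 loop `γ`. -/
def IsDeck {T Tt : Type*} [MetricSpace T] [MetricSpace Tt] (π : Tt → T)
    (x₀ : T) (α₀ : Path x₀ x₀) (τ : Tt → Tt) : Prop :=
  Continuous τ ∧ (∀ x, π (τ x) = π x) ∧
    ∀ (x : T) (γ : Path x x), IsDegreeOneLoop x₀ α₀ γ →
      ∀ γt : C(unitInterval, Tt), (∀ t, π (γt t) = γ t) → τ (γt 0) = γt 1

/-- `μ̃` is the natural lift of `μ` to the cover: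
`μ̃ (A) = ∫ #(π⁻¹(x) ∩ A) dμ (x)`. -/
def IsLiftedMeasure {T Tt : Type*} [MetricSpace T] [MeasurableSpace T]
    [MetricSpace Tt] [MeasurableSpace Tt] (π : Tt → T) (μ : Measure T)
    (μt : Measure Tt) : Prop :=
  ∀ A : Set Tt, MeasurableSet A → μt A = ∫⁻ x, ((π ⁻¹' {x} ∩ A).encard : ℝ≥0∞) ∂μ

/-! ### Newtonian spaces -/

/-- The seminorm of `N^{1,p}(U)`. -/
def NSeminorm {X : Type*} [PseudoMetricSpace X] [MeasurableSpace X] (μ : Measure X)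
    (p : ℝ) (U : Set X) (f : X → ℝ) : ℝ≥0∞ :=
  (∫⁻ x in U, ENNReal.ofReal |f x| ^ p ∂μ) ^ (1 / p) +
    ⨅ (ρ : X → ℝ≥0∞) (_ : Measurable ρ ∧ IsWeakUpperGradientOn μ p U f ρ),
      (∫⁻ x in U, ρ x ^ p ∂μ) ^ (1 / p)

/-- `f ∈ N^{1,p}_loc`. -/
def MemNloc {X : Type*} [PseudoMetricSpace X] [MeasurableSpace X] (μ : Measure X)
    (p : ℝ) (f : X → ℝ) : Prop :=
  ∀ U : Set X, IsOpen U → IsCompact (closure U) →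
    (∫⁻ x in U, ENNReal.ofReal |f x| ^ p ∂μ) < ⊤ ∧
      ∃ ρ : X → ℝ≥0∞, Measurable ρ ∧ IsWeakUpperGradientOn μ p U f ρ ∧
        (∫⁻ x in U, ρ x ^ p ∂μ) < ⊤

/-- The collection `F`: nonnegative Borel functions `ρ` on `T` such that `ρ ∘ π` is a
`p`-weak upper gradient of some `f ∈ N^{1,p}_loc (T̃)` with `f ∘ τ - f = 1` a.e. -/
def MemF {T Tt : Type*} [MetricSpace T] [MeasurableSpace T] [MetricSpace Tt]
    [MeasurableSpace Tt] (π : Tt → T) (τ : Tt → Tt) (μt : Measure Tt) (p : ℝ)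
    (ρ : T → ℝ≥0∞) : Prop :=
  Measurable ρ ∧ ∃ f : Tt → ℝ, MemNloc μt p f ∧ (∀ᵐ x ∂μt, f (τ x) - f x = 1) ∧
    IsWeakUpperGradient μt p f (ρ ∘ π)

/-- The capacity `cap_p^F T`. -/
def capF {T Tt : Type*} [MetricSpace T] [MeasurableSpace T] [MetricSpace Tt]
    [MeasurableSpace Tt] (μ : Measure T) (π : Tt → T) (τ : Tt → Tt) (μt : Measure Tt)
    (p : ℝ) : ℝ≥0∞ :=
  ⨅ (ρ : T → ℝ≥0∞) (_ : MemF π τ μt p ρ), ∫⁻ x, ρ x ^ p ∂μ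

/-! ### Miscellaneous operators -/

/-- The restricted Hardy–Littlewood maximal operator `M_R`. -/
def restrMax {T : Type*} [MetricSpace T] [MeasurableSpace T] (μ : Measure T)
    (R : ℝ≥0∞) (g : T → ℝ≥0∞) (x : T) : ℝ≥0∞ :=
  ⨆ (s : ℝ) (_ : 0 < s ∧ ENNReal.ofReal s ≤ R),
    (∫⁻ y in ball x s, g y ∂μ) / μ (ball x s)

/-- The upper Lebesgue integral. -/
def upperLintegral {Y : Type*} [MeasurableSpace Y] (ν : Measure Y)
    (F : Y → ℝ≥0∞) : ℝ≥0∞ :=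
  ⨅ (G : Y → ℝ≥0∞) (_ : Measurable G ∧ ∀ y, F y ≤ G y), ∫⁻ y, G y ∂ν

/-! ### The sets `Ω` and the functions `ψ̃`, `ζ`, `ψ` of Section 4.3 -/

/-- The set of points reachable from `A` by a rectifiable path inside `W`. -/
def reach {T : Type*} [MetricSpace T] (A W : Set T) : Set T :=
  {x | ∃ γ : UPath T, γ.start ∈ A ∧ γ.finish = x ∧ γ.InSet W}

/-- `inf_γ ∫_γ ρ ds` over rectifiable paths connecting `A` to `x` inside `W`. -/
def pathDist {T : Type*} [MetricSpace T] (ρ : T → ℝ≥0∞) (A W : Set T) (x : T) : ℝ≥0∞ :=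
  ⨅ (γ : UPath T) (_ : γ.start ∈ A ∧ γ.finish = x ∧ γ.InSet W), γ.integral ρ

open scoped Classical in
/-- The function `ψ̃`. -/
def psiTilde {T : Type*} [MetricSpace T] (ρ : T → ℝ≥0∞) (A W : Set T) (x : T) : ℝ :=
  if x ∈ reach A W then (pathDist ρ A W x).toReal else 0

/-- The function `min {1, ψ̃}`. -/
def zeta {T : Type*} [MetricSpace T] (ρ : T → ℝ≥0∞) (A W : Set T) (x : T) : ℝ :=
  min 1 (psiTilde ρ A W x)

/-- The competing admissible map `ψ = [min {1, ψ̃}] : T → ℝ/ℤ`. -/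
def psiMap {T : Type*} [MetricSpace T] (ρ : T → ℝ≥0∞) (A W : Set T) (x : T) :
    UnitAddCircle :=
  ((zeta ρ A W x : ℝ) : UnitAddCircle)

end Duality


/-! ### Auxiliary machinery for the proof of the relative isoperimetric inequality -/

namespace IsoAux
open Duality

lemma isClosed_sep {α : Type*} [TopologicalSpace α] {f : ℝ → α} {a b : ℝ}
    (hf : ContinuousOn f (Icc a b)) {K : Set α} (hK : IsClosed K) :
    IsClosed {t ∈ Icc a b | f t ∈ K} :=
  hf.preimage_isClosed_of_isClosed isClosed_Icc hK

lemma min1_abs {p q : ℝ} : |min 1 p - min 1 q| ≤ |p - q| := by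
  rcases le_total 1 p with h1 | h1 <;> rcases le_total 1 q with h2 | h2 <;>
    rw [abs_le] <;> constructor <;>
      simp [min_eq_left, min_eq_right, h1, h2] <;>
        cases abs_cases (p - q) <;> linarith [le_abs_self (p - q), neg_abs_le (p - q)]

lemma min_div_le {a b c : ℝ≥0∞} : min (a / c) (b / c) ≤ min a b / c := by
  rcases le_total a b with h | h
  · rw [min_eq_left h]; exact min_le_left _ _
  · rw [min_eq_right h]; exact min_le_right _ _

lemma div_le_div_all {a b p q : ℝ≥0∞} (h : a * q ≤ b * p) (hp0 : p ≠ 0) (hptop : p ≠ ⊤)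
    (hq0 : q ≠ 0) (hqtop : q ≠ ⊤) : a / p ≤ b / q := by
  rw [ENNReal.div_le_iff_le_mul (Or.inl hp0) (Or.inl hptop),
    show b / q * p = b * p / q by rw [div_eq_mul_inv, div_eq_mul_inv]; ring,
    ENNReal.le_div_iff_mul_le (Or.inl hq0) (Or.inl hqtop)]
  exact h

lemma two_ofReal_half : (2 : ℝ≥0∞) * ENNReal.ofReal (1/2) = 1 := by
  rw [show (1:ℝ)/2 = (2:ℝ)⁻¹ by norm_num, ENNReal.ofReal_inv_of_pos (by norm_num),
    ENNReal.ofReal_ofNat]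
  rw [ENNReal.mul_inv_cancel] <;> norm_num

variable {T : Type*} [MetricSpace T]

/-- Key variation lemma: a Lipschitz function which is `1` off a closed set `K`
changes along a `1`-Lipschitz path by at most `L` times the time spent in `K`. -/
lemma var_bound (γ : UPath T) {g : T → ℝ} {K : Set T} (hK : IsClosed K)
    {L : ℝ} (hL : 0 ≤ L) (hg : ∀ y z, |g y - g z| ≤ L * dist y z)
    (hg1 : ∀ y, y ∉ K → g y = 1) (hgle : ∀ y, g y ≤ 1) :
    |g γ.finish - g γ.start| ≤ L * (volume {t ∈ Icc γ.a γ.b | γ.toFun t ∈ K}).toReal := by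
  set a := γ.a with ha
  set b := γ.b with hb
  set f := γ.toFun with hf
  have hab : a ≤ b := γ.hab
  have hgc : Continuous g := by
    refine (LipschitzWith.of_dist_le_mul (K := L.toNNReal) (f := g) ?_).continuous
    intro y z
    rw [Real.dist_eq, Real.coe_toNNReal _ hL]
    exact hg y z
  have hfc : ContinuousOn f (Icc a b) := γ.lip.continuousOn
  have hSfin : volume {t ∈ Icc a b | f t ∈ K} ≠ ⊤ := by
    refine ne_of_lt (lt_of_le_of_lt (measure_mono (fun t ht => ht.1)) ?_)
    rw [Real.volume_Icc]; exact ENNReal.ofReal_lt_top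
  have hdistf : ∀ s ∈ Icc a b, ∀ t ∈ Icc a b, dist (f s) (f t) ≤ |s - t| := by
    intro s hs t ht
    have := γ.lip.dist_le_mul s hs t ht
    simpa [Real.dist_eq] using this
  have hstart : γ.start = f a := rfl
  have hfin : γ.finish = f b := rfl
  rw [hstart, hfin]
  rcases lt_trichotomy (g (f b)) (g (f a)) with hlt | heq | hgt
  · set Z := {t ∈ Icc a b | g (f t) ∈ Ici (g (f a))} with hZ
    have hZcl : IsClosed Z := isClosed_sep (hgc.comp_continuousOn hfc) isClosed_Ici
    have hZne : Z.Nonempty := ⟨a, ⟨left_mem_Icc.mpr hab, mem_Ici.mpr le_rfl⟩⟩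
    have hZbdd : BddAbove Z := bddAbove_Icc.mono (fun t ht => ht.1)
    set c := sSup Z with hc
    have hcZ : c ∈ Z := hZcl.csSup_mem hZne hZbdd
    have hcb : c ≤ b := hcZ.1.2
    have hIoc : Ioc c b ⊆ {t ∈ Icc a b | f t ∈ K} := by
      intro t ht
      have htIcc : t ∈ Icc a b := ⟨le_trans hcZ.1.1 ht.1.le, ht.2⟩
      refine ⟨htIcc, ?_⟩
      by_contra hnot
      have h1 : g (f t) = 1 := hg1 _ hnot
      have h2 : ¬ (g (f a) ≤ g (f t)) := by
        intro hle
        exact absurd (le_csSup hZbdd ⟨htIcc, hle⟩) (not_le.mpr ht.1)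
      have := hgle (f a)
      rw [h1] at h2
      exact h2 this
    have key : g (f a) - g (f b) ≤ L * (b - c) := by
      have h1 : g (f a) - g (f b) ≤ g (f c) - g (f b) := by
        have := hcZ.2; simp only [mem_Ici] at this; linarith
      have h2 : g (f c) - g (f b) ≤ |g (f c) - g (f b)| := le_abs_self _
      have h3 := hg (f c) (f b)
      have h4 : dist (f c) (f b) ≤ b - c := by
        have := hdistf c hcZ.1 b (right_mem_Icc.mpr hab)
        rwa [abs_of_nonpos (by linarith), neg_sub] at this
      have h5 : L * dist (f c) (f b) ≤ L * (b - c) := mul_le_mul_of_nonneg_left h4 hL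
      linarith
    have hvol : b - c ≤ (volume {t ∈ Icc a b | f t ∈ K}).toReal := by
      have h1 : volume (Ioc c b) ≤ volume {t ∈ Icc a b | f t ∈ K} := measure_mono hIoc
      have h2 : (volume (Ioc c b)).toReal = b - c := by
        rw [Real.volume_Ioc, ENNReal.toReal_ofReal (by linarith)]
      rw [← h2]
      exact ENNReal.toReal_mono hSfin h1
    rw [abs_of_nonpos (by linarith)]
    calc -(g (f b) - g (f a)) = g (f a) - g (f b) := by ring
      _ ≤ L * (b - c) := key
      _ ≤ L * (volume {t ∈ Icc a b | f t ∈ K}).toReal := mul_le_mul_of_nonneg_left hvol hL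
  · rw [heq]; simp only [sub_self, abs_zero]
    exact mul_nonneg hL ENNReal.toReal_nonneg
  · set Z := {t ∈ Icc a b | g (f t) ∈ Ici (g (f b))} with hZ
    have hZcl : IsClosed Z := isClosed_sep (hgc.comp_continuousOn hfc) isClosed_Ici
    have hZne : Z.Nonempty := ⟨b, ⟨right_mem_Icc.mpr hab, mem_Ici.mpr le_rfl⟩⟩
    have hZbdd : BddBelow Z := bddBelow_Icc.mono (fun t ht => ht.1)
    set c := sInf Z with hc
    have hcZ : c ∈ Z := hZcl.csInf_mem hZne hZbdd
    have hIco : Ico a c ⊆ {t ∈ Icc a b | f t ∈ K} := by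
      intro t ht
      have htIcc : t ∈ Icc a b := ⟨ht.1, le_trans ht.2.le hcZ.1.2⟩
      refine ⟨htIcc, ?_⟩
      by_contra hnot
      have h1 : g (f t) = 1 := hg1 _ hnot
      have h2 : ¬ (g (f b) ≤ g (f t)) := by
        intro hle
        exact absurd (csInf_le hZbdd ⟨htIcc, hle⟩) (not_le.mpr ht.2)
      have := hgle (f b)
      rw [h1] at h2
      exact h2 this
    have key : g (f b) - g (f a) ≤ L * (c - a) := by
      have h1 : g (f b) - g (f a) ≤ g (f c) - g (f a) := by
        have := hcZ.2; simp only [mem_Ici] at this; linarith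
      have h2 : g (f c) - g (f a) ≤ |g (f c) - g (f a)| := le_abs_self _
      have h3 := hg (f c) (f a)
      have h4 : dist (f c) (f a) ≤ c - a := by
        have := hdistf c hcZ.1 a (left_mem_Icc.mpr hab)
        rwa [abs_of_nonneg (by linarith [hcZ.1.1])] at this
      have h5 : L * dist (f c) (f a) ≤ L * (c - a) := mul_le_mul_of_nonneg_left h4 hL
      linarith
    have hvol : c - a ≤ (volume {t ∈ Icc a b | f t ∈ K}).toReal := by
      have h1 : volume (Ico a c) ≤ volume {t ∈ Icc a b | f t ∈ K} := measure_mono hIco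
      have h2 : (volume (Ico a c)).toReal = c - a := by
        rw [Real.volume_Ico, ENNReal.toReal_ofReal (by linarith [hcZ.1.1])]
      rw [← h2]
      exact ENNReal.toReal_mono hSfin h1
    rw [abs_of_nonneg (by linarith)]
    calc g (f b) - g (f a) ≤ L * (c - a) := key
      _ ≤ L * (volume {t ∈ Icc a b | f t ∈ K}).toReal := mul_le_mul_of_nonneg_left hvol hL

/-- The per-ball bump functions. -/
def Gf (c : ℕ → T) (rad : ℕ → ℝ) (i : ℕ) (y : T) : ℝ :=
  if 0 < rad i then min 1 (infDist y (ball (c i) (rad i)) / rad i) else 1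

/-- Their infimum: vanishes on the covering balls, `1` far from all of them. -/
def wf (c : ℕ → T) (rad : ℕ → ℝ) (y : T) : ℝ := ⨅ i, Gf c rad i y

/-- The covering-based candidate upper gradient. -/
def rhoHat (c : ℕ → T) (rad : ℕ → ℝ) (y : T) : ℝ≥0∞ :=
  ∑' i, if 0 < rad i then
    (ENNReal.ofReal (rad i))⁻¹ * (ball (c i) (5/2 * rad i)).indicator (fun _ => 1) y else 0

variable {c : ℕ → T} {rad : ℕ → ℝ}

lemma Gf_nonneg (i : ℕ) (y : T) : 0 ≤ Gf c rad i y := by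
  unfold Gf; split_ifs with h
  · exact le_min zero_le_one (div_nonneg infDist_nonneg h.le)
  · exact zero_le_one

lemma Gf_le_one (i : ℕ) (y : T) : Gf c rad i y ≤ 1 := by
  unfold Gf; split_ifs with h
  · exact min_le_left _ _
  · exact le_rfl

lemma Gf_continuous (i : ℕ) : Continuous (Gf c rad i) := by
  unfold Gf; split_ifs with h
  · exact continuous_const.min ((continuous_infDist_pt _).div_const _)
  · exact continuous_const

lemma Gf_bddBelow (y : T) : BddBelow (Set.range fun i => Gf c rad i y) :=
  ⟨0, fun _ ⟨j, hj⟩ => hj ▸ Gf_nonneg j y⟩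

lemma wf_nonneg (y : T) : 0 ≤ wf c rad y :=
  le_ciInf (fun i => Gf_nonneg i y)

lemma wf_le (i : ℕ) (y : T) : wf c rad y ≤ Gf c rad i y :=
  ciInf_le (Gf_bddBelow y) i

lemma wf_le_one (y : T) : wf c rad y ≤ 1 :=
  le_trans (wf_le 0 y) (Gf_le_one 0 y)

lemma wf_measurable [MeasurableSpace T] [BorelSpace T] : Measurable (wf c rad) :=
  Measurable.iInf (fun i => (Gf_continuous i).measurable)

lemma wf_eq_one {y : T} (h : ∀ i, 0 < rad i → y ∉ ball (c i) (2 * rad i)) :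
    wf c rad y = 1 := by
  have hG : ∀ i, Gf c rad i y = 1 := by
    intro i
    unfold Gf; split_ifs with hi
    · have hinf : rad i ≤ infDist y (ball (c i) (rad i)) := by
        by_contra hcon
        push_neg at hcon
        obtain ⟨z, hz, hdz⟩ := (infDist_lt_iff ⟨c i, mem_ball_self hi⟩).mp hcon
        rw [mem_ball] at hz
        have hy := h i hi
        rw [mem_ball] at hy
        push_neg at hy
        have h2 : dist y (c i) < 2 * rad i := by
          calc dist y (c i) ≤ dist y z + dist z (c i) := dist_triangle _ _ _
            _ < rad i + rad i := add_lt_add hdz hz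
            _ = 2 * rad i := by ring
        linarith
      have : (1:ℝ) ≤ infDist y (ball (c i) (rad i)) / rad i :=
        (one_le_div hi).mpr hinf
      exact min_eq_left this
    · rfl
  unfold wf
  simp only [hG]
  exact ciInf_const

lemma wf_eq_zero {y : T} {i : ℕ} (hy : y ∈ ball (c i) (rad i)) :
    wf c rad y = 0 := by
  have hri : 0 < rad i := lt_of_le_of_lt dist_nonneg (mem_ball.mp hy)
  have hGi : Gf c rad i y = 0 := by
    unfold Gf
    rw [if_pos hri, infDist_zero_of_mem hy, zero_div]
    exact min_eq_right zero_le_one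
  exact le_antisymm (hGi ▸ wf_le i y) (wf_nonneg y)

lemma rhoHat_measurable [MeasurableSpace T] [BorelSpace T] : Measurable (rhoHat c rad) := by
  apply Measurable.ennreal_tsum
  intro i
  split_ifs with h
  · exact (measurable_const.indicator measurableSet_ball).const_mul _
  · exact measurable_const

/-- The functions `Gf i` satisfy the upper-gradient inequality along every
`1`-Lipschitz path, against `rhoHat`. -/
lemma Gf_ug (γ : UPath T) (i : ℕ) (hI : γ.integral (rhoHat c rad) ≠ ⊤) :
    |Gf c rad i γ.finish - Gf c rad i γ.start| ≤ (γ.integral (rhoHat c rad)).toReal := by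
  by_cases hri : 0 < rad i
  · set K : Set T := {y | infDist y (ball (c i) (rad i)) ≤ rad i} with hK
    have hKcl : IsClosed K := isClosed_le (continuous_infDist_pt _) continuous_const
    have hKball : K ⊆ ball (c i) (5/2 * rad i) := by
      intro y hy
      have hy' : infDist y (ball (c i) (rad i)) < (3/2) * rad i :=
        lt_of_le_of_lt hy (by linarith)
      obtain ⟨z, hz, hdz⟩ := (infDist_lt_iff ⟨c i, mem_ball_self hri⟩).mp hy'
      rw [mem_ball] at hz ⊢
      calc dist y (c i) ≤ dist y z + dist z (c i) := dist_triangle _ _ _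
        _ < (3/2) * rad i + rad i := add_lt_add hdz hz
        _ = 5/2 * rad i := by ring
    have hg : ∀ y z, |Gf c rad i y - Gf c rad i z| ≤ (rad i)⁻¹ * dist y z := by
      intro y z
      simp only [Gf, if_pos hri]
      refine le_trans min1_abs ?_
      rw [div_sub_div_same, abs_div, abs_of_pos hri, div_eq_inv_mul]
      refine mul_le_mul_of_nonneg_left ?_ (by positivity)
      rw [abs_sub_le_iff]
      constructor
      · have := infDist_le_infDist_add_dist (x := y) (y := z) (s := ball (c i) (rad i))
        have hd : dist z y = dist y z := dist_comm z y
        linarith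
      · have := infDist_le_infDist_add_dist (x := z) (y := y) (s := ball (c i) (rad i))
        have hd : dist z y = dist y z := dist_comm z y
        linarith
    have hg1 : ∀ y, y ∉ K → Gf c rad i y = 1 := by
      intro y hy
      simp only [hK, mem_setOf_eq, not_le] at hy
      simp only [Gf, if_pos hri]
      exact min_eq_left ((one_le_div hri).mpr hy.le)
    have hvb := var_bound γ hKcl (by positivity) hg hg1 (fun y => Gf_le_one i y)
    refine le_trans hvb ?_
    set S : Set ℝ := {t ∈ Icc γ.a γ.b | γ.toFun t ∈ K} with hS
    have hSmeas : MeasurableSet S := (isClosed_sep γ.lip.continuousOn hKcl).measurableSet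
    have hkey : (ENNReal.ofReal (rad i))⁻¹ * volume S ≤ γ.integral (rhoHat c rad) := by
      have hpt : ∀ t : ℝ, S.indicator (fun _ => (ENNReal.ofReal (rad i))⁻¹) t ≤
          rhoHat c rad (γ.toFun t) := by
        intro t
        by_cases ht : t ∈ S
        · rw [indicator_of_mem ht]
          have hmem : γ.toFun t ∈ ball (c i) (5/2 * rad i) := hKball ht.2
          have : rhoHat c rad (γ.toFun t) ≥
              (if 0 < rad i then (ENNReal.ofReal (rad i))⁻¹ *
               (ball (c i) (5/2 * rad i)).indicator (fun _ => 1) (γ.toFun t) else 0) :=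
            ENNReal.le_tsum i
          rw [if_pos hri, indicator_of_mem hmem, mul_one] at this
          exact this
        · rw [indicator_of_notMem ht]; exact zero_le
      calc (ENNReal.ofReal (rad i))⁻¹ * volume S
          = (ENNReal.ofReal (rad i))⁻¹ * (volume.restrict (Icc γ.a γ.b)) S := by
            rw [Measure.restrict_apply hSmeas,
              inter_eq_left.mpr (show S ⊆ Icc γ.a γ.b from fun t ht => ht.1)]
        _ = ∫⁻ t, S.indicator (fun _ => (ENNReal.ofReal (rad i))⁻¹) t
              ∂(volume.restrict (Icc γ.a γ.b)) := by
            rw [lintegral_indicator hSmeas, setLIntegral_const]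
        _ ≤ ∫⁻ t in Icc γ.a γ.b, rhoHat c rad (γ.toFun t) := lintegral_mono hpt
        _ = γ.integral (rhoHat c rad) := rfl
    have heq : (rad i)⁻¹ * (volume S).toReal =
        ((ENNReal.ofReal (rad i))⁻¹ * volume S).toReal := by
      rw [ENNReal.toReal_mul, ENNReal.toReal_inv, ENNReal.toReal_ofReal hri.le]
    rw [heq]
    exact ENNReal.toReal_mono hI hkey
  · simp only [Gf, if_neg hri, sub_self, abs_zero]
    exact ENNReal.toReal_nonneg

/-- `rhoHat` is an upper gradient of `wf`. -/
lemma wf_ug (γ : UPath T) :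
    edist (wf c rad γ.start) (wf c rad γ.finish) ≤ γ.integral (rhoHat c rad) := by
  by_cases hI : γ.integral (rhoHat c rad) = ⊤
  · rw [hI]; exact le_top
  set M := (γ.integral (rhoHat c rad)).toReal with hM
  have hM0 : 0 ≤ M := ENNReal.toReal_nonneg
  have habs : ∀ i, |Gf c rad i γ.finish - Gf c rad i γ.start| ≤ M :=
    fun i => Gf_ug γ i hI
  have key : ∀ p q : T, (∀ i, |Gf c rad i p - Gf c rad i q| ≤ M) →
      wf c rad p ≤ wf c rad q + M := by
    intro p q h
    refine le_of_forall_pos_le_add ?_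
    intro ε hε
    have h1 : wf c rad q < wf c rad q + ε := lt_add_of_pos_right _ hε
    obtain ⟨j, hj⟩ := exists_lt_of_ciInf_lt h1
    have h2 : wf c rad p ≤ Gf c rad j p := wf_le j p
    have h3 : Gf c rad j p ≤ Gf c rad j q + M := by
      have := h j; rw [abs_le] at this; linarith [this.2]
    linarith
  have h1 : wf c rad γ.start ≤ wf c rad γ.finish + M := by
    refine key _ _ (fun i => ?_)
    rw [abs_sub_comm]; exact habs i
  have h2 : wf c rad γ.finish ≤ wf c rad γ.start + M := key _ _ habs
  have habs' : |wf c rad γ.start - wf c rad γ.finish| ≤ M := by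
    rw [abs_le]; constructor <;> linarith
  rw [edist_dist, Real.dist_eq]
  calc ENNReal.ofReal |wf c rad γ.start - wf c rad γ.finish| ≤ ENNReal.ofReal M :=
        ENNReal.ofReal_le_ofReal habs'
    _ = γ.integral (rhoHat c rad) := ENNReal.ofReal_toReal hI

section Doubling

variable [MeasurableSpace T] [CompactSpace T] {μ : MeasureTheory.Measure T} {Cμ : ℝ≥0∞}

lemma doubling_all (hdb : IsDoubling μ Cμ) (hdiam : 0 < diam (univ : Set T)) :
    ∀ (y : T) (s : ℝ), 0 < s → μ (ball y (2 * s)) ≤ Cμ * μ (ball y s) := by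
  intro y s hs
  rcases lt_or_ge s (diam (univ : Set T)) with h | h
  · exact (hdb y s hs h).2.1
  · have h1 := (hdb y ((3/4) * diam (univ : Set T)) (by positivity) (by linarith)).2.1
    calc μ (ball y (2 * s)) ≤ μ univ := measure_mono (subset_univ _)
      _ ≤ μ (ball y (2 * ((3/4) * diam (univ : Set T)))) := by
          refine measure_mono (fun z _ => ?_)
          rw [mem_ball]
          have := dist_le_diam_of_mem (isCompact_univ.isBounded) (mem_univ z) (mem_univ y)
          linarith
      _ ≤ Cμ * μ (ball y ((3/4) * diam (univ : Set T))) := h1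
      _ ≤ Cμ * μ (ball y s) :=
          mul_le_mul_right (measure_mono (ball_subset_ball (by linarith))) _

lemma doubling_pow (hdb : IsDoubling μ Cμ) (hdiam : 0 < diam (univ : Set T)) (n : ℕ) :
    ∀ (y : T) (s : ℝ), 0 < s → μ (ball y (2 ^ n * s)) ≤ Cμ ^ n * μ (ball y s) := by
  induction n with
  | zero => intro y s _; simp
  | succ n ih =>
      intro y s hs
      have h1 : (2:ℝ) ^ (n+1) * s = 2 * (2 ^ n * s) := by ring
      rw [h1]
      calc μ (ball y (2 * (2 ^ n * s))) ≤ Cμ * μ (ball y (2 ^ n * s)) :=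
            doubling_all hdb hdiam y _ (by positivity)
        _ ≤ Cμ * (Cμ ^ n * μ (ball y s)) := mul_le_mul_right (ih y s hs) _
        _ = Cμ ^ (n+1) * μ (ball y s) := by ring

end Doubling

/-- Integrality of differences of values of a lift on a fiber. -/
lemma lift_integral {T Tt : Type*} [MetricSpace T] [MetricSpace Tt] {π : Tt → T}
    {φ : T → UnitAddCircle} {φt : Tt → ℝ}
    (hφtlift : ∀ z, ((φt z : ℝ) : UnitAddCircle) = φ (π z)) {z z' : Tt}
    (h : π z = π z') : ∃ n : ℤ, φt z - φt z' = (n : ℝ) := by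
  have h1 : ((φt z : ℝ) : UnitAddCircle) = ((φt z' : ℝ) : UnitAddCircle) := by
    rw [hφtlift z, hφtlift z', h]
  have h2 : ((φt z - φt z' : ℝ) : UnitAddCircle) = 0 := by
    rw [AddCircle.coe_sub, h1, sub_self]
  obtain ⟨n, hn⟩ := (AddCircle.coe_eq_zero_iff _).mp h2
  exact ⟨n, by rw [← hn]; simp⟩

end IsoAux

set_option maxHeartbeats 2000000 in
open Duality in
/-- **Lemma 4.6 (relative isoperimetric inequality).** -/
theorem statement12 (Cμ : ℝ≥0∞) (CP lP : ℝ) :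
    ∃ (C : ℝ≥0∞) (lam : ℝ), 0 < C ∧ C < ⊤ ∧ 1 ≤ lam ∧
      ∀ (T : Type) [MetricSpace T] [MeasurableSpace T] [BorelSpace T] [CompactSpace T]
        (Tt : Type) [MetricSpace Tt]
        (μ : Measure T) (x₀ : T) (α₀ : Path x₀ x₀) (π : Tt → T) (τ : Tt → Tt),
        Standing μ Cμ CP lP x₀ α₀ → CoverSetup π → IsDeck π x₀ α₀ τ →
        ∀ (φ : T → UnitAddCircle) (k : ℤ) (φt : Tt → ℝ),
          0 < k → HasDegree x₀ α₀ φ k → Continuous φt →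
          (∀ x, ((φt x : ℝ) : UnitAddCircle) = φ (π x)) →
          (∃ xt₀ : Tt, φt xt₀ = 0) →
          ∀ (x : T) (r : ℝ), 0 < r →
            ball x (lam * r) ⊆ π '' (φt ⁻¹' Set.Ioo (-(1/4) : ℝ) (1/4)) →
            min (μ (ball x r ∩ π '' (φt ⁻¹' Set.Ioo (0 : ℝ) (1/4))) / μ (ball x r))
                (μ (ball x r ∩ π '' (φt ⁻¹' Set.Ioc (-(1/4) : ℝ) 0)) / μ (ball x r)) ≤
              C * (ENNReal.ofReal r / μ (ball x (lam * r))) *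
                codimH μ (π '' (φt ⁻¹' ({0} : Set ℝ)) ∩ ball x (lam * r)) := by
  classical
  set m : ℕ := 2 + ⌈1 / lP⌉₊ with hmdef
  by_cases hCtop : Cμ = ⊤
  · -- here the doubling hypothesis is contradictory unless `T` is a single point
    refine ⟨1, 4 * max 1 lP, one_pos, ENNReal.one_lt_top, by nlinarith [le_max_left (1:ℝ) lP], ?_⟩
    intro T _ _ _ _ Tt _ μ x₀ α₀ π τ hSt hCov hDeck φ k φt hk hdeg hφtc hφtlift hφt0 x r hr hball
    obtain ⟨hdbl, hPoin, -, -, -⟩ := hSt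
    obtain ⟨hballpos, hPI⟩ := hPoin
    rcases le_or_gt (diam (univ : Set T)) 0 with hdiam0 | hdiam
    · -- subsingleton: one of the two sets is empty
      have hdisj : ball x r ∩ π '' (φt ⁻¹' Ioo (0:ℝ) (1/4)) = ∅ ∨
          ball x r ∩ π '' (φt ⁻¹' Ioc (-(1/4):ℝ) 0) = ∅ := by
        by_contra hcon
        push_neg at hcon
        obtain ⟨hne1, hne2⟩ := hcon
        obtain ⟨y1, hy1⟩ := hne1
        obtain ⟨y2, hy2⟩ := hne2
        have hy12 : y1 = y2 := by
          have h1 := dist_le_diam_of_mem (isCompact_univ.isBounded) (mem_univ y1) (mem_univ y2)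
          have h2 : dist y1 y2 = 0 := le_antisymm (by linarith) dist_nonneg
          exact eq_of_dist_eq_zero h2
        obtain ⟨z1, hz1, hπ1⟩ := hy1.2
        obtain ⟨z2, hz2, hπ2⟩ := hy2.2
        obtain ⟨n, hn⟩ := IsoAux.lift_integral hφtlift (z := z1) (z' := z2)
          (by rw [hπ1, hπ2, hy12])
        rw [mem_preimage] at hz1 hz2
        have h0 : (0:ℝ) < n := by rw [← hn]; have := hz1.1; have := hz2.2; linarith
        have h1' : (n:ℝ) < 1 := by rw [← hn]; have := hz1.2; have := hz2.1; linarith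
        have hi0 : (0:ℤ) < n := by exact_mod_cast h0
        have hi1 : n < 1 := by exact_mod_cast h1'
        omega
      rcases hdisj with h | h
      · refine le_trans (min_le_left _ _) ?_
        rw [h, measure_empty, ENNReal.zero_div]
        exact zero_le
      · refine le_trans (min_le_right _ _) ?_
        rw [h, measure_empty, ENNReal.zero_div]
        exact zero_le
    · exfalso
      have h := (hdbl x ((1/2) * diam (univ : Set T)) (by positivity) (by linarith)).2.2
      rw [hCtop] at h
      have hpos := (hballpos x ((1/2) * diam (univ : Set T)) (by positivity)).1
      rw [ENNReal.top_mul hpos.ne'] at h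
      exact absurd h (lt_irrefl ⊤)
  · -- main case
    set C : ℝ≥0∞ := 4 * (ENNReal.ofReal CP + 1) * (Cμ + 1) ^ (m + 2) + (Cμ + 1) with hCdef
    have hC1top : Cμ + 1 ≠ ⊤ := by
      simp [ENNReal.add_eq_top, hCtop]
    have hCne0 : C ≠ 0 := by
      rw [hCdef]
      intro hc
      rw [add_eq_zero] at hc
      exact (by simp : (Cμ:ℝ≥0∞) + 1 ≠ 0) hc.2
    have hCnetop : C ≠ ⊤ := by
      rw [hCdef]
      refine ENNReal.add_ne_top.mpr ⟨?_, hC1top⟩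
      refine ENNReal.mul_ne_top (ENNReal.mul_ne_top (by simp) ?_) (ENNReal.pow_ne_top hC1top)
      exact ENNReal.add_ne_top.mpr ⟨ENNReal.ofReal_ne_top, ENNReal.one_ne_top⟩
    refine ⟨C, 4 * max 1 lP, pos_iff_ne_zero.mpr hCne0, lt_top_iff_ne_top.mpr hCnetop,
      by nlinarith [le_max_left (1:ℝ) lP], ?_⟩
    intro T _ _ _ _ Tt _ μ x₀ α₀ π τ hSt hCov hDeck φ k φt hk hdeg hφtc hφtlift hφt0 x r hr hball
    obtain ⟨hdbl, hPoin, -, -, -⟩ := hSt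
    obtain ⟨hballpos, hPI⟩ := hPoin
    rcases le_or_gt (diam (univ : Set T)) 0 with hdiam0 | hdiam
    · -- subsingleton case, as before
      have hdisj : ball x r ∩ π '' (φt ⁻¹' Ioo (0:ℝ) (1/4)) = ∅ ∨
          ball x r ∩ π '' (φt ⁻¹' Ioc (-(1/4):ℝ) 0) = ∅ := by
        by_contra hcon
        push_neg at hcon
        obtain ⟨hne1, hne2⟩ := hcon
        obtain ⟨y1, hy1⟩ := hne1
        obtain ⟨y2, hy2⟩ := hne2
        have hy12 : y1 = y2 := by
          have h1 := dist_le_diam_of_mem (isCompact_univ.isBounded) (mem_univ y1) (mem_univ y2)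
          have h2 : dist y1 y2 = 0 := le_antisymm (by linarith) dist_nonneg
          exact eq_of_dist_eq_zero h2
        obtain ⟨z1, hz1, hπ1⟩ := hy1.2
        obtain ⟨z2, hz2, hπ2⟩ := hy2.2
        obtain ⟨n, hn⟩ := IsoAux.lift_integral hφtlift (z := z1) (z' := z2)
          (by rw [hπ1, hπ2, hy12])
        rw [mem_preimage] at hz1 hz2
        have h0 : (0:ℝ) < n := by rw [← hn]; have := hz1.1; have := hz2.2; linarith
        have h1' : (n:ℝ) < 1 := by rw [← hn]; have := hz1.2; have := hz2.1; linarith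
        have hi0 : (0:ℤ) < n := by exact_mod_cast h0
        have hi1 : n < 1 := by exact_mod_cast h1'
        omega
      rcases hdisj with h | h
      · refine le_trans (min_le_left _ _) ?_
        rw [h, measure_empty, ENNReal.zero_div]
        exact zero_le
      · refine le_trans (min_le_right _ _) ?_
        rw [h, measure_empty, ENNReal.zero_div]
        exact zero_le
    -- from here on: diam > 0, Cμ ≠ ⊤
    have hdouble : ∀ (y : T) (s : ℝ), 0 < s → μ (ball y (2 * s)) ≤ Cμ * μ (ball y s) :=
      IsoAux.doubling_all hdbl hdiam
    set R : ℝ := 4 * max 1 lP * r with hRdef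
    have hmax1 : (1:ℝ) ≤ max 1 lP := le_max_left _ _
    have hRpos : 0 < R := by rw [hRdef]; positivity
    have hrR2 : r ≤ R / 2 := by rw [hRdef]; nlinarith
    have hR4 : r ≤ R / 4 := by rw [hRdef]; nlinarith
    -- the open set V' and the local lift-value function v
    set V' : Set T := π '' (φt ⁻¹' Ioo (-(1/4) : ℝ) (1/4)) with hV'def
    have hV'open : IsOpen V' :=
      (hCov.1.isLocalHomeomorph.isOpenMap) _ (isOpen_Ioo.preimage hφtc)
    have hvex : ∀ y ∈ V', ∃ z : Tt, π z = y ∧ φt z ∈ Ioo (-(1/4):ℝ) (1/4) := by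
      rintro y ⟨z, hz1, hz2⟩; exact ⟨z, hz2, hz1⟩
    choose vz hvz1 hvz2 using hvex
    set v : T → ℝ := fun y => if h : y ∈ V' then φt (vz y h) else 0 with hvdef
    have hveq : ∀ y (h : y ∈ V'), v y = φt (vz y h) := by
      intro y h; simp only [hvdef]; rw [dif_pos h]
    have hvuniq : ∀ y (h : y ∈ V'), ∀ z : Tt, π z = y →
        φt z ∈ Ioo (-(1/4):ℝ) (1/4) → v y = φt z := by
      intro y h z hz hmem
      obtain ⟨n, hn⟩ := IsoAux.lift_integral hφtlift (z := vz y h) (z' := z)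
        (by rw [hvz1 y h, hz])
      have h1 := hvz2 y h
      have hn0 : n = 0 := by
        have habs : |(n:ℝ)| < 1 := by
          rw [← hn, abs_lt]
          constructor
          · have := h1.1; have := hmem.2; linarith
          · have := h1.2; have := hmem.1; linarith
        exact_mod_cast Int.abs_lt_one_iff.mp (by exact_mod_cast habs)
      rw [hveq y h]
      rw [hn0] at hn
      push_cast at hn
      linarith
    have hvS : ∀ y, y ∈ V' → v y = 0 → y ∈ π '' (φt ⁻¹' ({0} : Set ℝ)) := by
      intro y h h0
      refine ⟨vz y h, ?_, hvz1 y h⟩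
      rw [mem_preimage, mem_singleton_iff, ← hveq y h]
      exact h0
    have hvplus : ∀ y, y ∈ π '' (φt ⁻¹' Ioo (0:ℝ) (1/4)) → y ∈ V' ∧ 0 < v y := by
      rintro y ⟨z, hz, hπz⟩
      rw [mem_preimage] at hz
      have hyV : y ∈ V' := ⟨z, by rw [mem_preimage]; exact ⟨by linarith [hz.1], hz.2⟩, hπz⟩
      have := hvuniq y hyV z hπz ⟨by linarith [hz.1], hz.2⟩
      exact ⟨hyV, by rw [this]; exact hz.1⟩
    have hvminus : ∀ y, y ∈ π '' (φt ⁻¹' Ioc (-(1/4):ℝ) 0) → y ∈ V' ∧ v y ≤ 0 := by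
      rintro y ⟨z, hz, hπz⟩
      rw [mem_preimage] at hz
      have hmem : φt z ∈ Ioo (-(1/4):ℝ) (1/4) := ⟨hz.1, by linarith [hz.2]⟩
      have hyV : y ∈ V' := ⟨z, by rw [mem_preimage]; exact hmem, hπz⟩
      have := hvuniq y hyV z hπz hmem
      exact ⟨hyV, by rw [this]; exact hz.2⟩
    have hvcont : ContinuousOn v V' := by
      intro y hy
      obtain ⟨e, hze, hfe⟩ := hCov.1.isLocalHomeomorph (vz y hy)
      set g : T → ℝ := fun y' => φt (e.symm y') with hgdef
      have hgcont : ContinuousOn g e.target :=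
        hφtc.comp_continuousOn e.symm.continuousOn
      set N : Set T := e.target ∩ g ⁻¹' (Ioo (-(1/4):ℝ) (1/4)) with hNdef
      have hNopen : IsOpen N :=
        hgcont.isOpen_inter_preimage e.open_target isOpen_Ioo
      have hye : e (vz y hy) = y := (congrFun hfe (vz y hy)).symm.trans (hvz1 y hy)
      have hsymm : e.symm y = vz y hy := by
        conv_lhs => rw [← hye]
        exact e.left_inv hze
      have hyN : y ∈ N := by
        constructor
        · rw [← hye]; exact e.map_source hze
        · show g y ∈ Ioo (-(1/4):ℝ) (1/4)
          rw [hgdef]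
          simp only
          rw [hsymm]
          exact hvz2 y hy
      have hEqOn : ∀ y' ∈ N, v y' = g y' := by
        intro y' hy'
        have hz' : π (e.symm y') = y' := by rw [hfe]; exact e.right_inv hy'.1
        exact hvuniq y' ⟨e.symm y', by rw [mem_preimage]; exact hy'.2, hz'⟩
          (e.symm y') hz' hy'.2
      have hgc : ContinuousAt g y := by
        have h1 : ContinuousAt (⇑e.symm) y := by
          apply e.symm.continuousAt
          rw [OpenPartialHomeomorph.symm_source]
          exact hyN.1
        exact hφtc.continuousAt.comp h1
      have : ContinuousAt v y := by
        refine (continuousAt_congr ?_).mpr hgc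
        exact Filter.eventuallyEq_of_mem (hNopen.mem_nhds hyN) hEqOn
      exact this.continuousWithinAt
    -- measure facts
    have hμuniv : μ (univ : Set T) < ⊤ := by
      have h := (hballpos x (diam (univ : Set T) + 1) (by positivity)).2
      refine lt_of_le_of_lt (measure_mono (fun z _ => ?_)) h
      rw [mem_ball]
      have := dist_le_diam_of_mem (isCompact_univ.isBounded) (mem_univ z) (mem_univ x)
      linarith
    haveI : IsFiniteMeasure μ := ⟨hμuniv⟩
    have hB0 : μ (ball x r) ≠ 0 := (hballpos x r hr).1.ne'
    have hBfin : μ (ball x r) ≠ ⊤ := (hballpos x r hr).2.ne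
    have hlam0 : μ (ball x R) ≠ 0 := (hballpos x R hRpos).1.ne'
    have hlamfin : μ (ball x R) ≠ ⊤ := (hballpos x R hRpos).2.ne
    -- the parameter δ
    set Mlam : ℝ := (μ (ball x R)).toReal with hMlamdef
    set mB : ℝ := (μ (ball x r)).toReal with hmBdef
    have hMlam_nonneg : 0 ≤ Mlam := ENNReal.toReal_nonneg
    have hmBpos : 0 < mB := ENNReal.toReal_pos hB0 hBfin
    set δ : ℝ := min (r/2) (r * mB / (Mlam + 1)) with hδdef
    have hδpos : 0 < δ := lt_min (by linarith) (by positivity)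
    have hδkey : ENNReal.ofReal δ * μ (ball x R) ≤ ENNReal.ofReal r * μ (ball x r) := by
      have h1 : μ (ball x R) = ENNReal.ofReal Mlam := (ENNReal.ofReal_toReal hlamfin).symm
      have h2 : μ (ball x r) = ENNReal.ofReal mB := (ENNReal.ofReal_toReal hBfin).symm
      rw [h1, h2, ← ENNReal.ofReal_mul hδpos.le, ← ENNReal.ofReal_mul hr.le]
      apply ENNReal.ofReal_le_ofReal
      have hδ2 : δ ≤ r * mB / (Mlam + 1) := min_le_right _ _
      have h3 : δ * (Mlam + 1) ≤ r * mB :=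
        (le_div_iff₀ (by positivity)).mp hδ2
      nlinarith
    set K : ℝ≥0∞ := C * (ENNReal.ofReal r / μ (ball x R)) with hKdef
    have hK0 : K ≠ 0 := by
      rw [hKdef]
      refine mul_ne_zero hCne0 ?_
      exact ENNReal.div_ne_zero.mpr ⟨(ENNReal.ofReal_pos.mpr hr).ne', hlamfin⟩
    have hKtop : K ≠ ⊤ := by
      rw [hKdef]
      refine ENNReal.mul_ne_top hCnetop ?_
      intro hdiv
      rw [ENNReal.div_eq_top] at hdiv
      rcases hdiv with ⟨-, h0⟩ | ⟨htop, -⟩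
      · exact hlam0 h0
      · exact ENNReal.ofReal_ne_top htop
    -- the core estimate for an arbitrary admissible cover
    have hcore : ∀ (cc : ℕ → T) (rr : ℕ → ℝ), (∀ i, rr i ≤ δ) →
        (π '' (φt ⁻¹' ({0} : Set ℝ)) ∩ ball x R ⊆ ⋃ i, ball (cc i) (rr i)) →
        min (μ (ball x r ∩ π '' (φt ⁻¹' Ioo (0 : ℝ) (1/4))) / μ (ball x r))
          (μ (ball x r ∩ π '' (φt ⁻¹' Ioc (-(1/4) : ℝ) 0)) / μ (ball x r)) ≤
          K * ∑' i, μ (ball (cc i) (rr i)) / ENNReal.ofReal (rr i) := by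
      intro cc rr hrr hcov
      set Sg : ℝ≥0∞ := ∑' i, μ (ball (cc i) (rr i)) / ENNReal.ofReal (rr i) with hSgdef
      set w : T → ℝ := IsoAux.wf cc rr with hwdef
      set ρh : T → ℝ≥0∞ := IsoAux.rhoHat cc rr with hρhdef
      set Ofar : Set T := {y : T | R/4 < dist x y} with hOfardef
      have hOfaropen : IsOpen Ofar := by
        have h : Ofar = (fun y => dist x y) ⁻¹' (Ioi (R/4)) := rfl
        rw [h]
        exact isOpen_Ioi.preimage (continuous_const.dist continuous_id)
      set ρ : T → ℝ≥0∞ := fun y => ρh y + Ofar.indicator (fun _ => ⊤) y with hρdef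
      set E : Set T := ball x (R/2) ∩ (V' ∩ v ⁻¹' (Ioi 0)) with hEdef
      have hEopen : IsOpen E :=
        isOpen_ball.inter (hvcont.isOpen_inter_preimage hV'open isOpen_Ioi)
      set u : T → ℝ := E.indicator w with hudef
      have humeas : Measurable u := by
        rw [hudef, hwdef]
        exact (IsoAux.wf_measurable).indicator hEopen.measurableSet
      have hubdd : ∀ y, ‖u y‖ ≤ 1 := by
        intro y
        rw [Real.norm_eq_abs, hudef]
        by_cases hy : y ∈ E
        · rw [indicator_of_mem hy, hwdef, abs_of_nonneg (IsoAux.wf_nonneg y)]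
          exact IsoAux.wf_le_one y
        · rw [indicator_of_notMem hy]; simp
      have huloc : LocallyIntegrable u μ :=
        ((integrable_const (1:ℝ)).mono' humeas.aestronglyMeasurable
          (ae_of_all _ hubdd)).locallyIntegrable
      have hρmeas : Measurable ρ := by
        rw [hρdef, hρhdef]
        exact (IsoAux.rhoHat_measurable).add
          (measurable_const.indicator hOfaropen.measurableSet)
      have hptρ : ∀ y, ρh y ≤ ρ y := by
        intro y
        simp only [hρdef]
        exact self_le_add_right _ _
      -- the upper gradient property
      have hug : IsUpperGradient u ρ := by
        intro γ
        by_cases hI : γ.integral ρ = ⊤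
        · rw [hI]; exact le_top
        show edist (u (γ.toFun γ.a)) (u (γ.toFun γ.b)) ≤ γ.integral ρ
        rcases eq_or_lt_of_le γ.hab with hab | hab
        · rw [hab, edist_self]; exact zero_le
        -- the trace stays in the closed ball of radius R/4
        have htr : ∀ t ∈ Icc γ.a γ.b, dist x (γ.toFun t) ≤ R/4 := by
          by_contra hcon
          push_neg at hcon
          obtain ⟨t₀, ht₀, hfar⟩ := hcon
          have hc : ContinuousWithinAt γ.toFun (Icc γ.a γ.b) t₀ := γ.lip.continuousOn t₀ ht₀
          have hmemf : γ.toFun ⁻¹' Ofar ∈ 𝓝[Icc γ.a γ.b] t₀ :=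
            hc.preimage_mem_nhdsWithin (hOfaropen.mem_nhds hfar)
          obtain ⟨Uo, hUo, ht₀U, hsubU⟩ := mem_nhdsWithin.mp hmemf
          obtain ⟨η, hη, hballU⟩ := Metric.isOpen_iff.mp hUo t₀ ht₀U
          set s1 : ℝ := max γ.a (t₀ - η/2) with hs1
          set s2 : ℝ := min γ.b (t₀ + η/2) with hs2
          have hs12 : s1 < s2 := by
            rcases lt_or_eq_of_le ht₀.2 with h | h
            · refine lt_of_le_of_lt (max_le ht₀.1 (by linarith)) ?_
              exact lt_min h (by linarith)
            · have ht₀a : γ.a < t₀ := by rw [h]; exact hab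
              refine lt_of_lt_of_le (b := t₀) ?_ ?_
              · exact max_lt ht₀a (by linarith)
              · exact le_min ht₀.2 (by linarith)
          have hsub2 : Ioo s1 s2 ⊆ {t ∈ Icc γ.a γ.b | γ.toFun t ∈ Ofar} := by
            intro t ht
            have ht1 := ht.1
            have ht2 := ht.2
            have htIcc : t ∈ Icc γ.a γ.b :=
              ⟨le_trans (le_max_left _ _) ht1.le, le_trans ht2.le (min_le_left _ _)⟩
            refine ⟨htIcc, ?_⟩
            apply hsubU
            refine ⟨hballU ?_, htIcc⟩
            rw [mem_ball, Real.dist_eq, abs_lt]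
            have hb1 : t₀ - η/2 ≤ s1 := le_max_right _ _
            have hb2 : s2 ≤ t₀ + η/2 := min_le_right _ _
            constructor <;> linarith
          set P : Set ℝ := {t ∈ Icc γ.a γ.b | γ.toFun t ∈ Ofar} with hPdef
          have hvolP : 0 < volume P := by
            refine lt_of_lt_of_le ?_ (measure_mono hsub2)
            rw [Real.volume_Ioo]
            exact ENNReal.ofReal_pos.mpr (by linarith)
          have hPmeas : MeasurableSet P := by
            have hPc : P = Icc γ.a γ.b \ {t ∈ Icc γ.a γ.b | γ.toFun t ∈ Ofarᶜ} := by
              ext t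
              simp only [hPdef, mem_diff, mem_sep_iff, mem_compl_iff]
              tauto
            rw [hPc]
            exact measurableSet_Icc.diff
              (IsoAux.isClosed_sep γ.lip.continuousOn hOfaropen.isClosed_compl).measurableSet
          have htop : γ.integral ρ = ⊤ := by
            have hpt : ∀ t, P.indicator (fun _ => (⊤:ℝ≥0∞)) t ≤ ρ (γ.toFun t) := by
              intro t
              by_cases ht : t ∈ P
              · rw [indicator_of_mem ht]
                simp only [hρdef]
                rw [indicator_of_mem ht.2]
                simp
              · rw [indicator_of_notMem ht]; exact zero_le
            have h3 : (⊤:ℝ≥0∞) ≤ γ.integral ρ := by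
              calc (⊤:ℝ≥0∞) = ⊤ * (volume.restrict (Icc γ.a γ.b)) P := by
                    rw [Measure.restrict_apply hPmeas,
                      inter_eq_left.mpr (show P ⊆ Icc γ.a γ.b from fun t ht => ht.1),
                      ENNReal.top_mul hvolP.ne']
                _ = ∫⁻ t, P.indicator (fun _ => (⊤:ℝ≥0∞)) t
                      ∂(volume.restrict (Icc γ.a γ.b)) := by
                    rw [lintegral_indicator hPmeas, setLIntegral_const]
                _ ≤ ∫⁻ t in Icc γ.a γ.b, ρ (γ.toFun t) := lintegral_mono hpt
            exact top_le_iff.mp h3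
          exact hI htop
        have htrmem : ∀ t ∈ Icc γ.a γ.b, γ.toFun t ∈ V' ∧ γ.toFun t ∈ ball x (R/2) := by
          intro t ht
          have h1 := htr t ht
          have h2 : γ.toFun t ∈ ball x R := by
            rw [mem_ball, dist_comm]; linarith
          exact ⟨hball h2, by rw [mem_ball, dist_comm]; linarith⟩
        have hvγ : ContinuousOn (fun t => v (γ.toFun t)) (Icc γ.a γ.b) :=
          hvcont.comp γ.lip.continuousOn (fun t ht => (htrmem t ht).1)
        have huval1 : ∀ t ∈ Icc γ.a γ.b, 0 < v (γ.toFun t) →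
            u (γ.toFun t) = w (γ.toFun t) := by
          intro t ht hv
          rw [hudef]
          have hmemE : γ.toFun t ∈ E := by
            rw [hEdef]
            exact ⟨(htrmem t ht).2, (htrmem t ht).1, hv⟩
          exact indicator_of_mem hmemE _
        have huval0 : ∀ t ∈ Icc γ.a γ.b, v (γ.toFun t) ≤ 0 → u (γ.toFun t) = 0 := by
          intro t ht hv
          rw [hudef]
          refine indicator_of_notMem ?_ _
          rw [hEdef]
          rintro ⟨-, -, hv'⟩
          exact absurd hv' (not_lt.mpr hv)
        have haI : γ.a ∈ Icc γ.a γ.b := left_mem_Icc.mpr γ.hab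
        have hbI : γ.b ∈ Icc γ.a γ.b := right_mem_Icc.mpr γ.hab
        have hsubint : ∀ a' b', γ.a ≤ a' → a' ≤ b' → b' ≤ γ.b →
            edist (w (γ.toFun a')) (w (γ.toFun b')) ≤ γ.integral ρ := by
          intro a' b' h1 h2 h3
          have hlip' : LipschitzOnWith 1 γ.toFun (Icc a' b') :=
            γ.lip.mono (Icc_subset_Icc h1 h3)
          have hwug := IsoAux.wf_ug (c := cc) (rad := rr) ⟨a', b', h2, γ.toFun, hlip'⟩
          rw [hwdef]
          refine le_trans hwug ?_
          calc (∫⁻ t in Icc a' b', IsoAux.rhoHat cc rr (γ.toFun t)) ≤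
                ∫⁻ t in Icc γ.a γ.b, IsoAux.rhoHat cc rr (γ.toFun t) :=
                lintegral_mono' (Measure.restrict_mono (Icc_subset_Icc h1 h3) le_rfl) le_rfl
            _ ≤ ∫⁻ t in Icc γ.a γ.b, ρ (γ.toFun t) := by
                refine lintegral_mono (fun t => ?_)
                rw [← hρhdef]
                exact hptρ _
        rcases lt_or_ge 0 (v (γ.toFun γ.a)) with hva | hva
        · rcases lt_or_ge 0 (v (γ.toFun γ.b)) with hvb | hvb
          · rw [huval1 _ haI hva, huval1 _ hbI hvb]
            exact hsubint γ.a γ.b le_rfl γ.hab le_rfl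
          · -- va > 0 ≥ vb : first crossing
            set Z : Set ℝ := {t ∈ Icc γ.a γ.b | v (γ.toFun t) ∈ Iic 0} with hZdef
            have hZcl : IsClosed Z := IsoAux.isClosed_sep hvγ isClosed_Iic
            have hZne : Z.Nonempty := ⟨γ.b, hbI, mem_Iic.mpr hvb⟩
            have hZbdd : BddBelow Z := bddBelow_Icc.mono (fun t ht => ht.1)
            set t₂ := sInf Z with ht₂def
            have ht₂Z : t₂ ∈ Z := hZcl.csInf_mem hZne hZbdd
            have hat₂ : γ.a < t₂ := by
              rcases lt_or_eq_of_le ht₂Z.1.1 with h | h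
              · exact h
              · exfalso; rw [← h] at ht₂Z
                exact absurd ht₂Z.2 (not_le.mpr hva)
            have hposl : ∀ s, γ.a ≤ s → s < t₂ → 0 < v (γ.toFun s) := by
              intro s h1 h2
              by_contra hc
              push_neg at hc
              exact absurd (csInf_le hZbdd ⟨⟨h1, le_trans h2.le ht₂Z.1.2⟩, mem_Iic.mpr hc⟩)
                (not_le.mpr h2)
            have hv0 : v (γ.toFun t₂) = 0 := by
              refine le_antisymm ht₂Z.2 ?_
              have hne : (𝓝[Ico γ.a t₂] t₂).NeBot := by
                rw [← mem_closure_iff_nhdsWithin_neBot, closure_Ico hat₂.ne]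
                exact right_mem_Icc.mpr hat₂.le
              have htd : Tendsto (fun s => v (γ.toFun s)) (𝓝[Ico γ.a t₂] t₂)
                  (𝓝 (v (γ.toFun t₂))) :=
                (hvγ t₂ ht₂Z.1).mono_left
                  (nhdsWithin_mono _ (fun s hs => ⟨hs.1, le_trans hs.2.le ht₂Z.1.2⟩))
              refine ge_of_tendsto htd ?_
              filter_upwards [self_mem_nhdsWithin] with s hs
              exact (hposl s hs.1 hs.2).le
            have hmemS : γ.toFun t₂ ∈ π '' (φt ⁻¹' ({0}:Set ℝ)) ∩ ball x R := by
              refine ⟨hvS _ (htrmem t₂ ht₂Z.1).1 hv0, ?_⟩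
              have := htr t₂ ht₂Z.1
              rw [mem_ball, dist_comm]; linarith
            obtain ⟨i, hi⟩ := mem_iUnion.mp (hcov hmemS)
            have hw0 : w (γ.toFun t₂) = 0 := by rw [hwdef]; exact IsoAux.wf_eq_zero hi
            rw [huval1 _ haI hva, huval0 _ hbI hvb]
            have heq2 : edist (w (γ.toFun γ.a)) (0:ℝ) =
                edist (w (γ.toFun γ.a)) (w (γ.toFun t₂)) := by rw [hw0]
            rw [heq2]
            exact hsubint γ.a t₂ le_rfl hat₂.le ht₂Z.1.2
        · rcases lt_or_ge 0 (v (γ.toFun γ.b)) with hvb | hvb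
          · -- va ≤ 0 < vb : last crossing
            set Z : Set ℝ := {t ∈ Icc γ.a γ.b | v (γ.toFun t) ∈ Iic 0} with hZdef
            have hZcl : IsClosed Z := IsoAux.isClosed_sep hvγ isClosed_Iic
            have hZne : Z.Nonempty := ⟨γ.a, haI, mem_Iic.mpr hva⟩
            have hZbdd : BddAbove Z := bddAbove_Icc.mono (fun t ht => ht.1)
            set t₁ := sSup Z with ht₁def
            have ht₁Z : t₁ ∈ Z := hZcl.csSup_mem hZne hZbdd
            have hat₁ : t₁ < γ.b := by
              rcases lt_or_eq_of_le ht₁Z.1.2 with h | h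
              · exact h
              · exfalso; rw [h] at ht₁Z
                exact absurd ht₁Z.2 (not_le.mpr hvb)
            have hposr : ∀ s, t₁ < s → s ≤ γ.b → 0 < v (γ.toFun s) := by
              intro s h1 h2
              by_contra hc
              push_neg at hc
              exact absurd (le_csSup hZbdd ⟨⟨le_trans ht₁Z.1.1 h1.le, h2⟩, mem_Iic.mpr hc⟩)
                (not_le.mpr h1)
            have hv0 : v (γ.toFun t₁) = 0 := by
              refine le_antisymm ht₁Z.2 ?_
              have hne : (𝓝[Ioc t₁ γ.b] t₁).NeBot := by
                rw [← mem_closure_iff_nhdsWithin_neBot, closure_Ioc hat₁.ne]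
                exact left_mem_Icc.mpr hat₁.le
              have htd : Tendsto (fun s => v (γ.toFun s)) (𝓝[Ioc t₁ γ.b] t₁)
                  (𝓝 (v (γ.toFun t₁))) :=
                (hvγ t₁ ht₁Z.1).mono_left
                  (nhdsWithin_mono _ (fun s hs => ⟨le_trans ht₁Z.1.1 hs.1.le, hs.2⟩))
              refine ge_of_tendsto htd ?_
              filter_upwards [self_mem_nhdsWithin] with s hs
              exact (hposr s hs.1 hs.2).le
            have hmemS : γ.toFun t₁ ∈ π '' (φt ⁻¹' ({0}:Set ℝ)) ∩ ball x R := by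
              refine ⟨hvS _ (htrmem t₁ ht₁Z.1).1 hv0, ?_⟩
              have := htr t₁ ht₁Z.1
              rw [mem_ball, dist_comm]; linarith
            obtain ⟨i, hi⟩ := mem_iUnion.mp (hcov hmemS)
            have hw0 : w (γ.toFun t₁) = 0 := by rw [hwdef]; exact IsoAux.wf_eq_zero hi
            rw [huval0 _ haI hva, huval1 _ hbI hvb]
            have heq2 : edist (0:ℝ) (w (γ.toFun γ.b)) =
                edist (w (γ.toFun t₁)) (w (γ.toFun γ.b)) := by rw [hw0]
            rw [heq2]
            exact hsubint t₁ γ.b ht₁Z.1.1 hat₁.le le_rfl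
          · rw [huval0 _ haI hva, huval0 _ hbI hvb, edist_self]
            exact zero_le
      -- apply the Poincaré inequality
      have hPIx := hPI u ρ huloc hρmeas hug x r hr
      set c₀ : ℝ := ⨍ z in ball x r, u z ∂μ with hc₀def
      set IB : ℝ≥0∞ := ∫⁻ y in ball x r, ENNReal.ofReal |u y - c₀| ∂μ with hIBdef
      set G2 : Set T := ⋃ i, ball (cc i) (2 * rr i) with hG2def
      have hUplus : ∀ y, y ∈ ball x r ∩ π '' (φt ⁻¹' Ioo (0:ℝ) (1/4)) →
          y ∈ (ball x r ∩ {y : T | u y = 1}) ∪ G2 := by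
        intro y hy
        by_cases hyG : y ∈ G2
        · exact Or.inr hyG
        · left
          refine ⟨hy.1, ?_⟩
          obtain ⟨hyV, hyv⟩ := hvplus y hy.2
          have hyE : y ∈ E := by
            rw [hEdef]
            exact ⟨ball_subset_ball hrR2 hy.1, hyV, hyv⟩
          show u y = 1
          rw [hudef, indicator_of_mem hyE, hwdef]
          apply IsoAux.wf_eq_one
          intro i hri hyball
          refine hyG ?_
          rw [hG2def]
          exact mem_iUnion.mpr ⟨i, hyball⟩
      have hUminus : ∀ y, y ∈ ball x r ∩ π '' (φt ⁻¹' Ioc (-(1/4):ℝ) 0) → u y = 0 := by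
        intro y hy
        obtain ⟨hyV, hyv⟩ := hvminus y hy.2
        rw [hudef]
        refine indicator_of_notMem ?_ _
        rw [hEdef]
        rintro ⟨-, -, hv'⟩
        exact absurd hv' (not_lt.mpr hyv)
      -- oscillation lower bound
      have hosc : min (μ (ball x r ∩ π '' (φt ⁻¹' Ioo (0:ℝ) (1/4))))
          (μ (ball x r ∩ π '' (φt ⁻¹' Ioc (-(1/4):ℝ) 0))) ≤ 2 * IB + μ G2 := by
        have hmeasint : Measurable fun y => ENNReal.ofReal |u y - c₀| :=
          ((humeas.sub measurable_const).abs).ennreal_ofReal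
        have habs1 : (1:ℝ) ≤ |1 - c₀| + |c₀| := by
          have h := abs_add_le (1 - c₀) c₀
          simp only [sub_add_cancel, abs_one] at h
          exact h
        rcases le_or_gt (1/2 : ℝ) |1 - c₀| with hcase | hcase
        · refine le_trans (min_le_left _ _) ?_
          have hsplit : μ (ball x r ∩ π '' (φt ⁻¹' Ioo (0:ℝ) (1/4))) ≤
              μ (ball x r ∩ {y : T | u y = 1}) + μ G2 :=
            le_trans (measure_mono (fun y hy => hUplus y hy)) (measure_union_le _ _)
          have hl : ENNReal.ofReal (1/2) * μ (ball x r ∩ {y : T | u y = 1}) ≤ IB := by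
            calc ENNReal.ofReal (1/2) * μ (ball x r ∩ {y : T | u y = 1})
                = ∫⁻ _ in ball x r ∩ {y : T | u y = 1}, ENNReal.ofReal (1/2) ∂μ :=
                  (setLIntegral_const _ _).symm
              _ ≤ ∫⁻ y in ball x r ∩ {y : T | u y = 1}, ENNReal.ofReal |u y - c₀| ∂μ := by
                  refine setLIntegral_mono hmeasint (fun y hy => ?_)
                  apply ENNReal.ofReal_le_ofReal
                  rw [show u y = 1 from hy.2]
                  exact hcase
              _ ≤ IB :=
                  lintegral_mono' (Measure.restrict_mono inter_subset_left le_rfl) le_rfl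
          have h2 : μ (ball x r ∩ {y : T | u y = 1}) ≤ 2 * IB := by
            calc μ (ball x r ∩ {y : T | u y = 1})
                = 2 * (ENNReal.ofReal (1/2) * μ (ball x r ∩ {y : T | u y = 1})) := by
                  rw [← mul_assoc, IsoAux.two_ofReal_half, one_mul]
              _ ≤ 2 * IB := mul_le_mul_right hl _
          exact le_trans hsplit (add_le_add h2 le_rfl)
        · have hc2 : (1/2:ℝ) ≤ |c₀| := by linarith
          refine le_trans (min_le_right _ _) ?_
          have hsub0 : ball x r ∩ π '' (φt ⁻¹' Ioc (-(1/4):ℝ) 0) ⊆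
              ball x r ∩ {y : T | u y = 0} :=
            fun y hy => ⟨hy.1, hUminus y hy⟩
          have hl : ENNReal.ofReal (1/2) * μ (ball x r ∩ {y : T | u y = 0}) ≤ IB := by
            calc ENNReal.ofReal (1/2) * μ (ball x r ∩ {y : T | u y = 0})
                = ∫⁻ _ in ball x r ∩ {y : T | u y = 0}, ENNReal.ofReal (1/2) ∂μ :=
                  (setLIntegral_const _ _).symm
              _ ≤ ∫⁻ y in ball x r ∩ {y : T | u y = 0}, ENNReal.ofReal |u y - c₀| ∂μ := by
                  refine setLIntegral_mono hmeasint (fun y hy => ?_)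
                  apply ENNReal.ofReal_le_ofReal
                  rw [show u y = 0 from hy.2, zero_sub, abs_neg]
                  exact hc2
              _ ≤ IB :=
                  lintegral_mono' (Measure.restrict_mono inter_subset_left le_rfl) le_rfl
          calc μ (ball x r ∩ π '' (φt ⁻¹' Ioc (-(1/4):ℝ) 0))
              ≤ μ (ball x r ∩ {y : T | u y = 0}) := measure_mono hsub0
            _ = 2 * (ENNReal.ofReal (1/2) * μ (ball x r ∩ {y : T | u y = 0})) := by
                rw [← mul_assoc, IsoAux.two_ofReal_half, one_mul]
            _ ≤ 2 * IB := mul_le_mul_right hl _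
            _ ≤ 2 * IB + μ G2 := le_self_add
      -- bound on μ G2
      have hG2bound : μ G2 ≤ Cμ * (ENNReal.ofReal δ * Sg) := by
        rw [hG2def]
        refine le_trans (measure_iUnion_le _) ?_
        have hterm : ∀ i, μ (ball (cc i) (2 * rr i)) ≤
            Cμ * (ENNReal.ofReal δ * (μ (ball (cc i) (rr i)) / ENNReal.ofReal (rr i))) := by
          intro i
          by_cases hri : 0 < rr i
          · refine le_trans (hdouble (cc i) (rr i) hri) (mul_le_mul_right ?_ Cμ)
            have hr0 : ENNReal.ofReal (rr i) ≠ 0 := (ENNReal.ofReal_pos.mpr hri).ne'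
            have hrtop : ENNReal.ofReal (rr i) ≠ ⊤ := ENNReal.ofReal_ne_top
            calc μ (ball (cc i) (rr i))
                = ENNReal.ofReal (rr i) * (μ (ball (cc i) (rr i)) / ENNReal.ofReal (rr i)) :=
                  (ENNReal.mul_div_cancel hr0 hrtop).symm
              _ ≤ ENNReal.ofReal δ * (μ (ball (cc i) (rr i)) / ENNReal.ofReal (rr i)) :=
                  mul_le_mul_left (ENNReal.ofReal_le_ofReal (hrr i)) _
          · have hempty : ball (cc i) (2 * rr i) = ∅ :=
              ball_eq_empty.mpr (by push_neg at hri; linarith)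
            rw [hempty, measure_empty]; exact zero_le
        calc ∑' i, μ (ball (cc i) (2 * rr i))
            ≤ ∑' i, Cμ * (ENNReal.ofReal δ *
                (μ (ball (cc i) (rr i)) / ENNReal.ofReal (rr i))) :=
              ENNReal.tsum_le_tsum hterm
          _ = Cμ * (ENNReal.ofReal δ * Sg) := by
              rw [ENNReal.tsum_mul_left, ENNReal.tsum_mul_left, hSgdef]
      -- bound on the ρ-integral
      have hρint : (∫⁻ y in ball x (lP * r), ρ y ∂μ) ≤ Cμ ^ 2 * Sg := by
        have hlPR : lP * r ≤ R / 4 := by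
          rw [hRdef]
          have h1 := mul_le_mul_of_nonneg_right (le_max_right (1:ℝ) lP) hr.le
          linarith
        have hptw : ∀ y ∈ ball x (lP * r), ρ y = ρh y := by
          intro y hy
          simp only [hρdef]
          have hnot : y ∉ Ofar := by
            rw [hOfardef, mem_setOf_eq, not_lt, dist_comm]
            rw [mem_ball] at hy
            linarith
          rw [indicator_of_notMem hnot, add_zero]
        have hint1 : (∫⁻ y in ball x (lP * r), ρ y ∂μ) = ∫⁻ y in ball x (lP * r), ρh y ∂μ :=
          setLIntegral_congr_fun measurableSet_ball hptw
        rw [hint1]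
        refine le_trans (setLIntegral_le_lintegral _ _) ?_
        have hexp : ∀ y, ρh y = ∑' i, (if 0 < rr i then (ENNReal.ofReal (rr i))⁻¹ *
            (ball (cc i) (5/2 * rr i)).indicator (fun _ => (1:ℝ≥0∞)) y else 0) := fun y => rfl
        have hint2 : (∫⁻ y, ρh y ∂μ) = ∑' i, ∫⁻ y, (if 0 < rr i then
            (ENNReal.ofReal (rr i))⁻¹ *
            (ball (cc i) (5/2 * rr i)).indicator (fun _ => (1:ℝ≥0∞)) y else 0) ∂μ := by
          simp_rw [hexp]
          refine lintegral_tsum (fun i => ?_)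
          split_ifs with h
          · exact ((measurable_const.indicator measurableSet_ball).const_mul _).aemeasurable
          · exact measurable_const.aemeasurable
        rw [hint2, hSgdef, ← ENNReal.tsum_mul_left]
        refine ENNReal.tsum_le_tsum (fun i => ?_)
        by_cases hri : 0 < rr i
        · simp only [if_pos hri]
          rw [lintegral_const_mul _ (measurable_const.indicator measurableSet_ball),
            lintegral_indicator measurableSet_ball, setLIntegral_one]
          have hdb2 : μ (ball (cc i) (5/2 * rr i)) ≤ Cμ ^ 2 * μ (ball (cc i) (rr i)) := by
            have h1 : μ (ball (cc i) (5/2 * rr i)) ≤ μ (ball (cc i) (2^2 * rr i)) :=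
              measure_mono (ball_subset_ball (by nlinarith))
            exact le_trans h1 (IsoAux.doubling_pow hdbl hdiam 2 (cc i) (rr i) hri)
          calc (ENNReal.ofReal (rr i))⁻¹ * μ (ball (cc i) (5/2 * rr i))
              ≤ (ENNReal.ofReal (rr i))⁻¹ * (Cμ^2 * μ (ball (cc i) (rr i))) :=
                mul_le_mul_right hdb2 _
            _ = Cμ^2 * (μ (ball (cc i) (rr i)) / ENNReal.ofReal (rr i)) := by
                rw [div_eq_mul_inv]; ring
        · simp only [if_neg hri]
          rw [lintegral_zero]
          exact zero_le
      -- put everything together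
      have hmain : min (μ (ball x r ∩ π '' (φt ⁻¹' Ioo (0:ℝ) (1/4))) / μ (ball x r))
          (μ (ball x r ∩ π '' (φt ⁻¹' Ioc (-(1/4):ℝ) 0)) / μ (ball x r)) ≤
          2 * (IB / μ (ball x r)) + μ G2 / μ (ball x r) := by
        refine le_trans IsoAux.min_div_le ?_
        refine le_trans (ENNReal.div_le_div_right hosc _) ?_
        rw [ENNReal.add_div]
        refine add_le_add (le_of_eq ?_) le_rfl
        rw [div_eq_mul_inv, div_eq_mul_inv, mul_assoc]
      set X1 : ℝ≥0∞ := 2 * ENNReal.ofReal CP * ENNReal.ofReal r with hX1def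
      have hXle : ENNReal.ofReal (CP * diam (ball x r)) ≤ X1 := by
        rcases le_or_gt CP 0 with h | h
        · rw [ENNReal.ofReal_of_nonpos (by nlinarith [diam_nonneg (s := ball x r)])]
          exact zero_le
        · calc ENNReal.ofReal (CP * diam (ball x r)) ≤ ENNReal.ofReal (CP * (2 * r)) := by
                  apply ENNReal.ofReal_le_ofReal
                  exact mul_le_mul_of_nonneg_left (diam_ball hr.le) h.le
            _ = X1 := by
                  rw [hX1def, ENNReal.ofReal_mul h.le,
                    ENNReal.ofReal_mul (by norm_num : (0:ℝ) ≤ 2), ENNReal.ofReal_ofNat]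
                  ring
      have hT1 : 2 * (IB / μ (ball x r)) ≤
          (4 * ENNReal.ofReal CP * (Cμ^2 * Cμ^m)) * (ENNReal.ofReal r / μ (ball x R)) * Sg := by
        have hPIx' : IB / μ (ball x r) ≤ ENNReal.ofReal (CP * diam (ball x r)) *
            ((∫⁻ y in ball x (lP * r), ρ y ∂μ) / μ (ball x (lP * r))) := hPIx
        rcases le_or_gt lP 0 with hlP | hlP
        · have hbe : ball x (lP * r) = ∅ := ball_eq_empty.mpr (by nlinarith)
          have h0 : (∫⁻ y in ball x (lP * r), ρ y ∂μ) / μ (ball x (lP * r)) = 0 := by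
            rw [hbe, measure_empty, Measure.restrict_empty]
            simp
          rw [h0, mul_zero] at hPIx'
          have h00 : IB / μ (ball x r) = 0 := le_antisymm hPIx' (zero_le)
          rw [h00, mul_zero]
          exact zero_le
        · have hlPr : 0 < lP * r := by positivity
          have hlP0 : μ (ball x (lP * r)) ≠ 0 := (hballpos x (lP * r) hlPr).1.ne'
          have hlPfin : μ (ball x (lP * r)) ≠ ⊤ := (hballpos x (lP * r) hlPr).2.ne
          have hcomp : μ (ball x R) ≤ Cμ ^ m * μ (ball x (lP * r)) := by
            have hRle : R ≤ 2 ^ m * (lP * r) := by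
              rw [hRdef, hmdef]
              rcases le_or_gt 1 lP with h1 | h1
              · rw [max_eq_right h1]
                have h2 : (4:ℝ) ≤ 2 ^ (2 + ⌈1/lP⌉₊) := by
                  calc (4:ℝ) = 2^2 := by norm_num
                    _ ≤ 2 ^ (2 + ⌈1/lP⌉₊) := by
                        apply pow_le_pow_right₀ (by norm_num)
                        omega
                nlinarith
              · rw [max_eq_left h1.le]
                have h2 : 1/lP ≤ (⌈1/lP⌉₊ : ℝ) := Nat.le_ceil _
                have h3 : ((⌈1/lP⌉₊ : ℕ) : ℝ) ≤ 2 ^ (⌈1/lP⌉₊ : ℕ) := by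
                  exact_mod_cast (Nat.lt_two_pow_self).le
                have h4 : (1:ℝ) ≤ 2 ^ (⌈1/lP⌉₊:ℕ) * lP := by
                  have h5 : 1/lP ≤ (2:ℝ) ^ (⌈1/lP⌉₊:ℕ) := le_trans h2 h3
                  have h6 := mul_le_mul_of_nonneg_right h5 hlP.le
                  rw [div_mul_cancel₀ (1:ℝ) hlP.ne'] at h6
                  linarith
                have h5 : (2:ℝ) ^ (2 + ⌈1/lP⌉₊) = 4 * 2 ^ (⌈1/lP⌉₊:ℕ) := by
                  rw [pow_add]; norm_num
                rw [h5]
                nlinarith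
            calc μ (ball x R) ≤ μ (ball x (2 ^ m * (lP * r))) :=
                  measure_mono (ball_subset_ball hRle)
              _ ≤ Cμ ^ m * μ (ball x (lP * r)) :=
                  IsoAux.doubling_pow hdbl hdiam m x (lP * r) hlPr
          have hinv : (μ (ball x (lP * r)))⁻¹ ≤ Cμ ^ m / μ (ball x R) := by
            rw [ENNReal.le_div_iff_mul_le (Or.inl hlam0) (Or.inl hlamfin)]
            calc (μ (ball x (lP * r)))⁻¹ * μ (ball x R)
                ≤ (μ (ball x (lP * r)))⁻¹ * (Cμ ^ m * μ (ball x (lP * r))) :=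
                  mul_le_mul_right hcomp _
              _ = Cμ ^ m * ((μ (ball x (lP * r)))⁻¹ * μ (ball x (lP * r))) := by ring
              _ = Cμ ^ m := by rw [ENNReal.inv_mul_cancel hlP0 hlPfin, mul_one]
          have hfrac : (∫⁻ y in ball x (lP * r), ρ y ∂μ) / μ (ball x (lP * r)) ≤
              (Cμ^2 * Sg) * (Cμ ^ m / μ (ball x R)) := by
            rw [div_eq_mul_inv]
            exact mul_le_mul' hρint hinv
          calc 2 * (IB / μ (ball x r))
              ≤ 2 * (ENNReal.ofReal (CP * diam (ball x r)) *
                  ((∫⁻ y in ball x (lP * r), ρ y ∂μ) / μ (ball x (lP * r)))) :=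
                mul_le_mul_right hPIx' _
            _ ≤ 2 * (X1 * ((Cμ^2 * Sg) * (Cμ ^ m / μ (ball x R)))) :=
                mul_le_mul_right (mul_le_mul' hXle hfrac) _
            _ = (4 * ENNReal.ofReal CP * (Cμ^2 * Cμ^m)) *
                (ENNReal.ofReal r / μ (ball x R)) * Sg := by
                rw [hX1def, div_eq_mul_inv, div_eq_mul_inv]
                ring
      have hT2 : μ G2 / μ (ball x r) ≤ (Cμ + 1) * (ENNReal.ofReal r / μ (ball x R)) * Sg := by
        refine le_trans (ENNReal.div_le_div_right hG2bound _) ?_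
        have hdd : ENNReal.ofReal δ / μ (ball x r) ≤ ENNReal.ofReal r / μ (ball x R) :=
          IsoAux.div_le_div_all hδkey hB0 hBfin hlam0 hlamfin
        calc Cμ * (ENNReal.ofReal δ * Sg) / μ (ball x r)
            = Cμ * Sg * (ENNReal.ofReal δ / μ (ball x r)) := by
              rw [div_eq_mul_inv, div_eq_mul_inv]; ring
          _ ≤ Cμ * Sg * (ENNReal.ofReal r / μ (ball x R)) := mul_le_mul_right hdd _
          _ = Cμ * (ENNReal.ofReal r / μ (ball x R)) * Sg := by ring
          _ ≤ (Cμ + 1) * (ENNReal.ofReal r / μ (ball x R)) * Sg :=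
              mul_le_mul_left (mul_le_mul_left le_self_add _) _
      have hcoef : (4 * ENNReal.ofReal CP * (Cμ^2 * Cμ^m)) + (Cμ + 1) ≤ C := by
        rw [hCdef]
        refine add_le_add ?_ le_rfl
        have h1 : Cμ^2 * Cμ^m ≤ (Cμ + 1)^(m + 2) := by
          rw [← pow_add]
          calc Cμ ^ (2 + m) ≤ (Cμ + 1) ^ (2 + m) := pow_le_pow_left' le_self_add _
            _ = (Cμ + 1) ^ (m + 2) := by rw [Nat.add_comm]
        exact mul_le_mul' (mul_le_mul_right le_self_add _) h1
      refine le_trans hmain (le_trans (add_le_add hT1 hT2) ?_)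
      have hsum : (4 * ENNReal.ofReal CP * (Cμ^2 * Cμ^m)) * (ENNReal.ofReal r / μ (ball x R)) * Sg +
          (Cμ + 1) * (ENNReal.ofReal r / μ (ball x R)) * Sg =
          ((4 * ENNReal.ofReal CP * (Cμ^2 * Cμ^m)) + (Cμ + 1)) *
            (ENNReal.ofReal r / μ (ball x R)) * Sg := by ring
      rw [hsum, hKdef]
      exact mul_le_mul_left (mul_le_mul_left hcoef _) _
    -- from the core estimate to the codimension-1 Hausdorff content
    set A : Set T := π '' (φt ⁻¹' ({0} : Set ℝ)) ∩ ball x R with hAdef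
    set Iδ : ℝ≥0∞ := ⨅ (cc : ℕ → T) (rr : ℕ → ℝ) (_ : ∀ i, rr i ≤ δ)
      (_ : A ⊆ ⋃ i, ball (cc i) (rr i)),
        ∑' i, μ (ball (cc i) (rr i)) / ENNReal.ofReal (rr i) with hIδdef
    have hIle : Iδ ≤ codimH μ A := by
      show Iδ ≤ ⨆ (δ' : ℝ) (_ : 0 < δ'), ⨅ (c : ℕ → T) (r : ℕ → ℝ) (_ : ∀ i, r i ≤ δ')
        (_ : A ⊆ ⋃ i, ball (c i) (r i)), ∑' i, μ (ball (c i) (r i)) / ENNReal.ofReal (r i)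
      exact le_iSup_of_le δ (le_iSup_of_le hδpos le_rfl)
    have hfinal : min (μ (ball x r ∩ π '' (φt ⁻¹' Ioo (0 : ℝ) (1/4))) / μ (ball x r))
        (μ (ball x r ∩ π '' (φt ⁻¹' Ioc (-(1/4) : ℝ) 0)) / μ (ball x r)) ≤ K * Iδ := by
      refine ENNReal.le_of_forall_pos_le_add (fun ε hε hfin => ?_)
      have hIfin : Iδ ≠ ⊤ := by
        intro h
        rw [h, ENNReal.mul_top hK0] at hfin
        exact absurd hfin (lt_irrefl ⊤)
      have hεK : (ε : ℝ≥0∞) / K ≠ 0 := by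
        refine ENNReal.div_ne_zero.mpr ⟨?_, hKtop⟩
        exact_mod_cast hε.ne'
      have h1 : Iδ < Iδ + (ε : ℝ≥0∞) / K := ENNReal.lt_add_right hIfin hεK
      conv_lhs at h1 => rw [hIδdef]
      rw [iInf_lt_iff] at h1
      obtain ⟨cc, h1⟩ := h1
      rw [iInf_lt_iff] at h1
      obtain ⟨rr, h1⟩ := h1
      rw [iInf_lt_iff] at h1
      obtain ⟨hrr, h1⟩ := h1
      rw [iInf_lt_iff] at h1
      obtain ⟨hcovA, h1⟩ := h1
      refine le_trans (hcore cc rr hrr hcovA) ?_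
      calc K * ∑' i, μ (ball (cc i) (rr i)) / ENNReal.ofReal (rr i)
          ≤ K * (Iδ + (ε : ℝ≥0∞) / K) := mul_le_mul_right h1.le _
        _ = K * Iδ + K * ((ε : ℝ≥0∞) / K) := mul_add _ _ _
        _ = K * Iδ + ε := by rw [ENNReal.mul_div_cancel hK0 hKtop]
    exact le_trans hfinal (le_trans (mul_le_mul_right hIle _) le_rfl)
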